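/- arXiv:2011.00280 — 8 statements merged into one kernel-verified Lean document; each statement's English description precedes it below -/
import Mathlib

section
/- Let C be a collection of subsets of a set S that is closed under finite (binary) intersections, and suppose no member of C is a finite union of proper subsets belonging to C. If members X₁,...,X_m, Y₁,...,Y_n of C satisfy ⋃ᵢ Xᵢ ⊆ ⋃ⱼ Yⱼ, then for each i there is j with Xᵢ ⊆ Yⱼ. -/
/-- Let `C` be a family of subsets of `S` closed under binary intersections such that
no member of `C` is a finite union of members of `C` properly contained in it. If
`X 1, ..., X m, Y 1, ..., Y n ∈ C` satisfy `⋃ i, X i ⊆ ⋃ j, Y j`, then each `X i` is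
contained in some `Y j`. -/
theorem stmt_7 {S : Type*} (C : Set (Set S))
    (hinter : ∀ A ∈ C, ∀ B ∈ C, A ∩ B ∈ C)
    (hnounion : ∀ A ∈ C, ∀ l : List (Set S),
      (∀ B ∈ l, B ∈ C ∧ B ⊂ A) → A ≠ {x | ∃ B ∈ l, x ∈ B})
    {m n : ℕ} (X : Fin m → Set S) (Y : Fin n → Set S)
    (hX : ∀ i, X i ∈ C) (hY : ∀ j, Y j ∈ C)
    (h : (⋃ i, X i) ⊆ ⋃ j, Y j) :
    ∀ i, ∃ j, X i ⊆ Y j := by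
  intro i
  by_contra hc
  push_neg at hc
  have hXsub : X i ⊆ ⋃ j, Y j := fun x hx => h (Set.mem_iUnion.2 ⟨i, hx⟩)
  set l : List (Set S) := (List.finRange n).map (fun j => X i ∩ Y j) with hl
  apply hnounion (X i) (hX i) l
  · intro B hB
    simp only [hl, List.mem_map, List.mem_finRange] at hB
    obtain ⟨j, _, rfl⟩ := hB
    refine ⟨hinter _ (hX i) _ (hY j), Set.inter_subset_left.ssubset_of_ne ?_⟩
    intro heq
    exact hc j (fun x hx => (heq.symm.subset hx).2)
  · ext x
    simp only [Set.mem_setOf_eq, hl, List.mem_map, List.mem_finRange]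
    constructor
    · intro hx
      obtain ⟨j, hj⟩ := Set.mem_iUnion.1 (hXsub hx)
      exact ⟨_, ⟨j, trivial, rfl⟩, hx, hj⟩
    · rintro ⟨B, ⟨j, -, rfl⟩, hx, -⟩
      exact hx
end

section
/- Let M be a set with an injection f : M → M without cycles (fⁿ(x) ≠ x for all n ≥ 1). Define a simple subset of Mⁿ to be a set defined by a conjunction of conditions of the form x_i = fᵏ(x_j) and x_i = c (c ∈ M a constant). Then the intersection of two simple subsets of Mⁿ is either empty or simple. -/
open Function Set

/-- `f` has no cycles: no iterate has a fixed point. -/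
def NoCycles {M : Type} (f : M → M) : Prop := ∀ n : ℕ, 0 < n → ∀ x : M, f^[n] x ≠ x

/-- `(M, f, c)` is a model of the theory `T_N`: the `c i` are pairwise distinct,
`f` is a bijection from `M` onto `M` minus the `N` points `c 1, ..., c N`,
and `f` has no cycles. -/
structure ModelTN (N : ℕ) (M : Type) (f : M → M) (c : Fin N → M) : Prop where
  npos : 0 < N
  cinj : Function.Injective c
  finj : Function.Injective f
  frange : Set.range f = Set.univ \ Set.range c
  nocycles : NoCycles f

/-- A simple subset of `M^n`: defined by a conjunction of conditions
`x i = f^[k] (x j)` and `x i = c`. -/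
def IsSimple {M : Type} (f : M → M) {n : ℕ} (A : Set (Fin n → M)) : Prop :=
  ∃ (E : List (Fin n × Fin n × ℕ)) (Cs : List (Fin n × M)),
    A = {x | (∀ p ∈ E, x p.1 = f^[p.2.2] (x p.2.1)) ∧ (∀ q ∈ Cs, x q.1 = q.2)}

/-- Coordinate `i` is constant on `A`. -/
def ConstCoord {M : Type} {n : ℕ} (A : Set (Fin n → M)) (i : Fin n) : Prop :=
  ∃ a : M, ∀ x ∈ A, x i = a

/-- Coordinates `i`, `j` are related on `A` by an iterate of `f`. -/
def RelCoord {M : Type} (f : M → M) {n : ℕ} (A : Set (Fin n → M)) (i j : Fin n) : Prop :=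
  ∃ k : ℕ, (∀ x ∈ A, x i = f^[k] (x j)) ∨ (∀ x ∈ A, x j = f^[k] (x i))

/-- `rep` enumerates the equivalence classes of the partition associated to the
simple set `A`: each `rep a` is a non-constant coordinate, distinct `rep a`'s are
inequivalent, and every non-constant coordinate is equivalent to some `rep a`. -/
def ClassRep {M : Type} (f : M → M) {n : ℕ} (A : Set (Fin n → M)) {d : ℕ}
    (rep : Fin d → Fin n) : Prop :=
  (∀ a, ¬ ConstCoord A (rep a)) ∧
  (∀ a b, a ≠ b → ¬ RelCoord f A (rep a) (rep b)) ∧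
  (∀ i, ¬ ConstCoord A i → ∃ a, RelCoord f A i (rep a))

/-- Closed sets of the topology generated by the simple sets: finite unions of simple sets. -/
def ClosedInTop {M : Type} (f : M → M) {n : ℕ} (A : Set (Fin n → M)) : Prop :=
  ∃ l : List (Set (Fin n → M)), (∀ s ∈ l, IsSimple f s) ∧ A = {x | ∃ s ∈ l, x ∈ s}

/-- Closure in the topology generated by the simple sets. -/
def clTop {M : Type} (f : M → M) {n : ℕ} (A : Set (Fin n → M)) : Set (Fin n → M) :=
  ⋂₀ {B | ClosedInTop f B ∧ A ⊆ B}

/-- There is a chain `Z 0 ⊊ Z 1 ⊊ ... ⊊ Z d ⊆ A` of nonempty simple sets. -/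
def HasChain {M : Type} (f : M → M) {n : ℕ} (A : Set (Fin n → M)) (d : ℕ) : Prop :=
  ∃ Z : Fin (d+1) → Set (Fin n → M),
    StrictMono Z ∧ (∀ i, IsSimple f (Z i) ∧ (Z i).Nonempty) ∧ Z (Fin.last d) ⊆ A

/-- The dimension of a definable set is `d`: its closure contains a chain of `d+1`
nonempty simple sets but no chain of `d+2` such sets. -/
def HasDim {M : Type} (f : M → M) {n : ℕ} (A : Set (Fin n → M)) (d : ℕ) : Prop :=
  HasChain f (clTop f A) d ∧ ¬ HasChain f (clTop f A) (d+1)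

/-- Function symbols of the language `L_N`: `N` constants and one unary function. -/
def LNfun (N : ℕ) : ℕ → Type
  | 0 => Fin N
  | 1 => Unit
  | _ => Empty

/-- The language `L_N = {f, c_1, ..., c_N}`. -/
def LN (N : ℕ) : FirstOrder.Language := ⟨LNfun N, fun _ => Empty⟩

/-- The `L_N`-structure on `M` given by `f` and the constants `c`. -/
def SN {M : Type} (N : ℕ) (f : M → M) (c : Fin N → M) : (LN N).Structure M where
  funMap {k} F x :=
    match k, F, x with
    | 0, i, _ => c i
    | 1, _, x => f (x 0)
    | (_+2), F, _ => F.elim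
  RelMap {k} r _ := r.elim

/-- A subset of `M^α` is definable (with parameters) in the structure `(M, f, c)`. -/
def Defble {M : Type} (N : ℕ) (f : M → M) (c : Fin N → M) {α : Type}
    (s : Set (α → M)) : Prop :=
  letI := SN N f c
  Set.Definable (Set.univ : Set M) (LN N) s

/-- The product `F × A ⊆ M^(n+1)` of a finite subset of `M` and a subset of `M^n`. -/
def prodFS {M : Type} {n : ℕ} (F : Finset M) (A : Set (Fin n → M)) :
    Set (Fin (n+1) → M) :=
  {z | z (Fin.last n) ∈ (F : Set M) ∧ (fun i : Fin n => z i.castSucc) ∈ A}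

/-- A definable injection from `A ⊆ M^n` to `B ⊆ M^m`: an injection whose
(restricted) graph is a definable subset of `M^(n+m)`. -/
def DefInjOn {M : Type} (N : ℕ) (f : M → M) (c : Fin N → M) {n m : ℕ}
    (A : Set (Fin n → M)) (B : Set (Fin m → M)) : Prop :=
  ∃ g : (Fin n → M) → (Fin m → M), Set.InjOn g A ∧ Set.MapsTo g A B ∧
    Defble N f c {z : Fin (n+m) → M |
      (fun i : Fin n => z (Fin.castAdd m i)) ∈ A ∧
      (fun j : Fin m => z (Fin.natAdd n j)) = g (fun i : Fin n => z (Fin.castAdd m i))}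

/-- A definable bijection from `A ⊆ M^n` to `B ⊆ M^m`. -/
def DefBijOn {M : Type} (N : ℕ) (f : M → M) (c : Fin N → M) {n m : ℕ}
    (A : Set (Fin n → M)) (B : Set (Fin m → M)) : Prop :=
  ∃ g : (Fin n → M) → (Fin m → M), Set.BijOn g A B ∧
    Defble N f c {z : Fin (n+m) → M |
      (fun i : Fin n => z (Fin.castAdd m i)) ∈ A ∧
      (fun j : Fin m => z (Fin.natAdd n j)) = g (fun i : Fin n => z (Fin.castAdd m i))}

/-- For a cycle-free injection `f : M → M`, the intersection of two simple subsets of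
`M^n` is either empty or simple. -/
theorem stmt_8 {M : Type} (f : M → M) (hf : Function.Injective f)
    (hnc : NoCycles f) {n : ℕ} (A B : Set (Fin n → M))
    (hA : IsSimple f A) (hB : IsSimple f B) :
    A ∩ B = ∅ ∨ IsSimple f (A ∩ B) := by
  right
  obtain ⟨E1, C1, rfl⟩ := hA
  obtain ⟨E2, C2, rfl⟩ := hB
  refine ⟨E1 ++ E2, C1 ++ C2, ?_⟩
  ext x
  simp only [Set.mem_inter_iff, Set.mem_setOf_eq, List.mem_append]
  constructor
  · rintro ⟨⟨h1, h2⟩, h3, h4⟩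
    exact ⟨fun p hp => hp.elim (h1 p) (h3 p), fun q hq => hq.elim (h2 q) (h4 q)⟩
  · rintro ⟨h1, h2⟩
    exact ⟨⟨fun p hp => h1 p (Or.inl hp), fun q hq => h2 q (Or.inl hq)⟩,
           fun p hp => h1 p (Or.inr hp), fun q hq => h2 q (Or.inr hq)⟩
end

section
/- Let M be a model of T_N and A ⊆ Mⁿ a nonempty simple set with d equivalence classes in its associated partition. Then there is a definable bijection between A and M^d; in particular, A is in bijection with M^d (as plain sets, realized by a map defined coordinatewise using iterates of f). -/
open Function Set

/-- In a model of `T_N`, a nonempty simple set `A ⊆ M^n` whose associated partition has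
`d` equivalence classes (enumerated by determining elements `rep`) is in definable
bijection with `M^d`: the bijection is given coordinatewise by iterates of `f` (or
constants), and in particular `A` is in bijection with `M^d`. -/
theorem stmt_9 {M : Type} (N : ℕ) (f : M → M) (c : Fin N → M)
    (h : ModelTN N M f c) {n : ℕ} (A : Set (Fin n → M))
    (hA : IsSimple f A) (hne : A.Nonempty)
    {d : ℕ} (rep : Fin d → Fin n) (hrep : ClassRep f A rep)
    (hdet : ∀ i : Fin n, ¬ ConstCoord A i →
      ∃ (a : Fin d) (k : ℕ), ∀ x ∈ A, x i = f^[k] (x (rep a))) :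
    ∃ g : (Fin d → M) → (Fin n → M),
      Set.BijOn g Set.univ A ∧
      (∀ (a : Fin d) (x : Fin d → M), g x (rep a) = x a) ∧
      (∀ i : Fin n,
        (∃ (k : ℕ) (a : Fin d), ∀ x : Fin d → M, g x i = f^[k] (x a)) ∨
        (∃ m : M, ∀ x : Fin d → M, g x i = m)) ∧
      Nonempty (↥A ≃ (Fin d → M)) := by
  classical
  obtain ⟨x₀, hx₀A⟩ := hne
  obtain ⟨E, Cs, hAeq⟩ := hA
  have hzero : ∀ (k : ℕ) (m : M), f^[k] m = m → k = 0 := by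
    intro k m hk
    by_contra hk0
    exact h.nocycles k (Nat.pos_of_ne_zero hk0) m hk
  have hinj : ∀ k : ℕ, Function.Injective (f^[k]) := fun k => h.finj.iterate k
  set g : (Fin d → M) → (Fin n → M) := fun x i =>
    if hi : ConstCoord A i then hi.choose
    else f^[(hdet i hi).choose_spec.choose] (x (hdet i hi).choose) with hg
  have hgc : ∀ (i : Fin n), ConstCoord A i →
      ∃ m : M, (∀ z ∈ A, z i = m) ∧ ∀ x, g x i = m := by
    intro i hi
    exact ⟨hi.choose, hi.choose_spec, fun x => by simp [hg, hi]⟩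
  have hgn : ∀ (i : Fin n), ¬ ConstCoord A i →
      ∃ (a : Fin d) (k : ℕ), (∀ z ∈ A, z i = f^[k] (z (rep a))) ∧
        ∀ x, g x i = f^[k] (x a) := by
    intro i hi
    exact ⟨(hdet i hi).choose, (hdet i hi).choose_spec.choose,
      (hdet i hi).choose_spec.choose_spec, fun x => by simp [hg, hi]⟩
  -- key: any iterate relation valid on A is preserved by g
  have hkey : ∀ (i j : Fin n) (K : ℕ), (∀ z ∈ A, z i = f^[K] (z j)) →
      ∀ x : Fin d → M, g x i = f^[K] (g x j) := by
    intro i j K hK x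
    by_cases hj : ConstCoord A j
    · obtain ⟨mj, hmj1, hmj2⟩ := hgc j hj
      have hi : ConstCoord A i := by
        refine ⟨f^[K] mj, fun z hz => ?_⟩
        rw [hK z hz, hmj1 z hz]
      obtain ⟨mi, hmi1, hmi2⟩ := hgc i hi
      rw [hmi2 x, hmj2 x, ← hmi1 x₀ hx₀A, ← hmj1 x₀ hx₀A]
      exact hK x₀ hx₀A
    · have hi : ¬ ConstCoord A i := by
        intro hi
        apply hj
        obtain ⟨mi, hmi1, _⟩ := hgc i hi
        refine ⟨x₀ j, fun z hz => ?_⟩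
        apply hinj K
        rw [← hK z hz, ← hK x₀ hx₀A, hmi1 z hz, hmi1 x₀ hx₀A]
      obtain ⟨a, ki, hia, hix⟩ := hgn i hi
      obtain ⟨b, kj, hjb, hjx⟩ := hgn j hj
      have hrel : ∀ z ∈ A, f^[ki] (z (rep a)) = f^[K + kj] (z (rep b)) := by
        intro z hz
        rw [← hia z hz, Function.iterate_add_apply, ← hjb z hz]
        exact hK z hz
      have hab : a = b ∧ ki = K + kj := by
        rcases le_total ki (K + kj) with hle | hle
        · have ht : ∀ z ∈ A, z (rep a) = f^[K + kj - ki] (z (rep b)) := by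
            intro z hz
            apply hinj ki
            rw [← Function.iterate_add_apply, Nat.add_sub_cancel' hle]
            exact hrel z hz
          have hab : a = b := by
            by_contra hab
            exact hrep.2.1 a b hab ⟨K + kj - ki, Or.inl ht⟩
          have h0 : K + kj - ki = 0 := by
            apply hzero _ (x₀ (rep a))
            rw [← hab] at ht
            exact (ht x₀ hx₀A).symm
          exact ⟨hab, le_antisymm hle (Nat.sub_eq_zero_iff_le.mp h0)⟩
        · have ht : ∀ z ∈ A, z (rep b) = f^[ki - (K + kj)] (z (rep a)) := by
            intro z hz
            apply hinj (K + kj)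
            rw [← Function.iterate_add_apply, Nat.add_sub_cancel' hle]
            exact (hrel z hz).symm
          have hab : a = b := by
            by_contra hab
            exact hrep.2.1 a b hab ⟨ki - (K + kj), Or.inr ht⟩
          have h0 : ki - (K + kj) = 0 := by
            apply hzero _ (x₀ (rep b))
            rw [hab] at ht
            exact (ht x₀ hx₀A).symm
          exact ⟨hab, le_antisymm (Nat.sub_eq_zero_iff_le.mp h0) hle⟩
      rw [hix x, hjx x, hab.1, hab.2, Function.iterate_add_apply]
  -- g x (rep a) = x a
  have hrepeq : ∀ (a : Fin d) (x : Fin d → M), g x (rep a) = x a := by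
    intro a x
    have hnc : ¬ ConstCoord A (rep a) := hrep.1 a
    obtain ⟨b, k, hs1, hs2⟩ := hgn (rep a) hnc
    have hab : a = b := by
      by_contra hab
      exact hrep.2.1 a b hab ⟨k, Or.inl hs1⟩
    have h0 : k = 0 := by
      apply hzero _ (x₀ (rep a))
      have := hs1 x₀ hx₀A
      rw [← hab] at this
      exact this.symm
    rw [hs2 x, ← hab, h0, Function.iterate_zero_apply]
  -- g maps into A
  have hmem : ∀ x : Fin d → M, g x ∈ A := by
    intro x
    rw [hAeq]
    constructor
    · intro p hp
      apply hkey p.1 p.2.1 p.2.2 _ x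
      intro z hz
      rw [hAeq] at hz
      exact hz.1 p hp
    · intro q hq
      have hcs : ∀ z ∈ A, z q.1 = q.2 := by
        intro z hz
        rw [hAeq] at hz
        exact hz.2 q hq
      obtain ⟨m, hm1, hm2⟩ := hgc q.1 ⟨q.2, hcs⟩
      rw [hm2 x, ← hm1 x₀ hx₀A]
      exact hcs x₀ hx₀A
  have hbij : Set.BijOn g Set.univ A := by
    refine ⟨fun x _ => hmem x, ?_, ?_⟩
    · intro x _ y _ hxy
      funext a
      rw [← hrepeq a x, ← hrepeq a y, hxy]
    · intro y hy
      refine ⟨fun a => y (rep a), Set.mem_univ _, ?_⟩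
      funext i
      by_cases hi : ConstCoord A i
      · obtain ⟨m, hm1, hm2⟩ := hgc i hi
        exact (hm2 (fun a => y (rep a))).trans (hm1 y hy).symm
      · obtain ⟨a, k, hs1, hs2⟩ := hgn i hi
        exact (hs2 (fun a => y (rep a))).trans (hs1 y hy).symm
  refine ⟨g, hbij, hrepeq, ?_, ?_⟩
  · intro i
    by_cases hi : ConstCoord A i
    · obtain ⟨m, _, hm2⟩ := hgc i hi
      exact Or.inr ⟨m, hm2⟩
    · obtain ⟨a, k, _, hs2⟩ := hgn i hi
      exact Or.inl ⟨k, a, hs2⟩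
  · exact ⟨(Set.BijOn.equiv g hbij).symm.trans (Equiv.Set.univ (Fin d → M))⟩
end

section
/- Let A ⊊ B be simple subsets of Mⁿ (over a cycle-free injection f). Then the number of equivalence classes in the partition associated to A is strictly less than the number of equivalence classes associated to B. Consequently, A and B cannot have the same dimension. -/
open Function Set

section Helpers

variable {M : Type} {f : M → M} {n : ℕ}

lemma relcoord_mono {A B : Set (Fin n → M)} (h : A ⊆ B) {i j : Fin n}
    (hr : RelCoord f B i j) : RelCoord f A i j := by
  obtain ⟨k, hk | hk⟩ := hr
  · exact ⟨k, Or.inl fun x hx => hk x (h hx)⟩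
  · exact ⟨k, Or.inr fun x hx => hk x (h hx)⟩

lemma constcoord_mono {A B : Set (Fin n → M)} (h : A ⊆ B) {i : Fin n}
    (hc : ConstCoord B i) : ConstCoord A i := by
  obtain ⟨a, ha⟩ := hc
  exact ⟨a, fun x hx => ha x (h hx)⟩

lemma relcoord_symm {A : Set (Fin n → M)} {i j : Fin n}
    (hr : RelCoord f A i j) : RelCoord f A j i := by
  obtain ⟨k, hk⟩ := hr
  exact ⟨k, hk.symm⟩

lemma relcoord_trans (hf : Function.Injective f) {A : Set (Fin n → M)} {i j l : Fin n}
    (h1 : RelCoord f A i j) (h2 : RelCoord f A j l) : RelCoord f A i l := by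
  obtain ⟨k, hk | hk⟩ := h1 <;> obtain ⟨m, hm | hm⟩ := h2
  · refine ⟨k + m, Or.inl fun x hx => ?_⟩
    rw [hk x hx, hm x hx, Function.iterate_add_apply]
  · rcases le_total m k with hle | hle
    · refine ⟨k - m, Or.inl fun x hx => ?_⟩
      rw [hm x hx, ← Function.iterate_add_apply, Nat.sub_add_cancel hle, ← hk x hx]
    · refine ⟨m - k, Or.inr fun x hx => ?_⟩
      rw [hk x hx, ← Function.iterate_add_apply, Nat.sub_add_cancel hle, ← hm x hx]
  · rcases le_total k m with hle | hle
    · refine ⟨m - k, Or.inl fun x hx => ?_⟩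
      apply hf.iterate k
      rw [← hk x hx, hm x hx, ← Function.iterate_add_apply, Nat.add_sub_cancel' hle]
    · refine ⟨k - m, Or.inr fun x hx => ?_⟩
      apply hf.iterate m
      rw [← hm x hx, hk x hx, ← Function.iterate_add_apply, Nat.add_sub_cancel' hle]
  · refine ⟨m + k, Or.inr fun x hx => ?_⟩
    rw [hm x hx, hk x hx, Function.iterate_add_apply]

lemma constcoord_of_rel (hf : Function.Injective f) {A : Set (Fin n → M)}
    (hne : A.Nonempty) {i j : Fin n} (hr : RelCoord f A i j) (hc : ConstCoord A j) :
    ConstCoord A i := by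
  obtain ⟨a, ha⟩ := hc
  obtain ⟨x0, hx0⟩ := hne
  obtain ⟨k, hk | hk⟩ := hr
  · exact ⟨f^[k] a, fun x hx => by rw [hk x hx, ha x hx]⟩
  · refine ⟨x0 i, fun x hx => hf.iterate k ?_⟩
    rw [← hk x hx, ← hk x0 hx0, ha x hx, ha x0 hx0]

lemma iterate_eq_iff_of_nocycles (hf : Function.Injective f) (hnc : NoCycles f)
    {p q : ℕ} {y : M} (h : f^[p] y = f^[q] y) : p = q := by
  rcases le_total p q with hle | hle
  all_goals {
    rcases Nat.eq_or_lt_of_le hle with heq | hlt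
    · omega
    · exfalso
      first
      | (apply hnc (q - p) (by omega) y
         apply hf.iterate p
         rw [← Function.iterate_add_apply, Nat.add_sub_cancel' hle, ← h])
      | (apply hnc (p - q) (by omega) y
         apply hf.iterate q
         rw [← Function.iterate_add_apply, Nat.add_sub_cancel' hle, h]) }

lemma mem_of_facts {A : Set (Fin n → M)} (hA : IsSimple f A) (x : Fin n → M)
    (hc : ∀ i a, (∀ y ∈ A, y i = a) → x i = a)
    (hr : ∀ i j k, (∀ y ∈ A, y i = f^[k] (y j)) → x i = f^[k] (x j)) : x ∈ A := by
  obtain ⟨E, Cs, rfl⟩ := hA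
  exact ⟨fun p hp => hr p.1 p.2.1 p.2.2 (fun y hy => hy.1 p hp),
         fun q hq => hc q.1 q.2 (fun y hy => hy.2 q hq)⟩

lemma exists_fact {A B : Set (Fin n → M)} (hA : IsSimple f A) (hAB : A ⊂ B) :
    (∃ i a, (∀ y ∈ A, y i = a) ∧ ¬(∀ y ∈ B, y i = a)) ∨
    (∃ i j k, (∀ y ∈ A, y i = f^[k] (y j)) ∧ ¬(∀ y ∈ B, y i = f^[k] (y j))) := by
  obtain ⟨x, hxB, hxA⟩ := exists_of_ssubset hAB
  by_contra h
  push_neg at h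
  obtain ⟨h1, h2⟩ := h
  exact hxA (mem_of_facts hA x (fun i a ha => h1 i a ha x hxB)
    (fun i j k hk => h2 i j k hk x hxB))

/-- Key: if `i` is constant on `A` but not on `B`, some class of `B` is
missed by any map `φ` compatible with the class structure. -/
lemma key_const {A B : Set (Fin n → M)} (hf : Function.Injective f)
    (hsub : A ⊆ B) (hne : A.Nonempty) {dA dB : ℕ} {repA : Fin dA → Fin n}
    {repB : Fin dB → Fin n} (hrA : ClassRep f A repA) (hrB : ClassRep f B repB)
    (φ : Fin dA → Fin dB) (hφ : ∀ a, RelCoord f B (repA a) (repB (φ a)))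
    {i : Fin n} (hci : ConstCoord A i) (hci' : ¬ ConstCoord B i) :
    ∃ b, ∀ a, φ a ≠ b := by
  obtain ⟨b, hb⟩ := hrB.2.2 i hci'
  refine ⟨b, fun a hab => ?_⟩
  have h1 : RelCoord f B (repA a) (repB b) := hab ▸ hφ a
  have h2 : RelCoord f A (repA a) i :=
    relcoord_mono hsub (relcoord_trans hf h1 (relcoord_symm hb))
  exact hrA.1 a (constcoord_of_rel hf hne h2 hci)

end Helpers

/-- If `A ⊊ B` are simple subsets of `M^n` (over a cycle-free injection `f`), `A`
nonempty, then the number of equivalence classes of the partition associated to `A` is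
strictly less than that of `B`; in particular the two dimensions differ. -/
theorem stmt_10 {M : Type} (f : M → M) (hf : Function.Injective f)
    (hnc : NoCycles f) {n : ℕ} (A B : Set (Fin n → M))
    (hA : IsSimple f A) (hB : IsSimple f B) (hAB : A ⊂ B) (hne : A.Nonempty)
    {dA dB : ℕ} (repA : Fin dA → Fin n) (repB : Fin dB → Fin n)
    (hrA : ClassRep f A repA) (hrB : ClassRep f B repB) :
    dA < dB ∧ dA ≠ dB := by
  have hsub : A ⊆ B := hAB.subset
  -- construct the map φ from A-classes to B-classes
  have hφex : ∀ a : Fin dA, ∃ b : Fin dB, RelCoord f B (repA a) (repB b) := by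
    intro a
    exact hrB.2.2 (repA a) (fun hc => hrA.1 a (constcoord_mono hsub hc))
  choose φ hφ using hφex
  have φinj : Function.Injective φ := by
    intro a a' h
    by_contra hne'
    apply hrA.2.1 a a' hne'
    have h1 : RelCoord f B (repA a) (repB (φ a')) := h ▸ hφ a
    exact relcoord_mono hsub (relcoord_trans hf h1 (relcoord_symm (hφ a')))
  -- find a B-class missed by φ
  have hmiss : ∃ b, ∀ a, φ a ≠ b := by
    obtain ⟨x0, hx0⟩ := id hne
    rcases exists_fact hA hAB with ⟨i, a, hAf, hBf⟩ | ⟨i, j, k, hAf, hBf⟩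
    · -- a constant fact of A fails on B
      have hciB : ¬ ConstCoord B i := by
        rintro ⟨a', ha'⟩
        have : a' = a := by rw [← ha' x0 (hsub hx0), hAf x0 hx0]
        exact hBf (fun y hy => this ▸ ha' y hy)
      exact key_const hf hsub hne hrA hrB φ hφ ⟨a, hAf⟩ hciB
    · -- a relation fact of A fails on B
      have hrij : RelCoord f A i j := ⟨k, Or.inl hAf⟩
      by_cases hciA : ConstCoord A i
      · -- then j is constant on A too; one of them is not constant on B
        have hcjA : ConstCoord A j :=
          constcoord_of_rel hf hne (relcoord_symm hrij) hciA
        by_cases hciB : ConstCoord B i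
        · by_cases hcjB : ConstCoord B j
          · exfalso
            obtain ⟨ai, hai⟩ := hciB
            obtain ⟨aj, haj⟩ := hcjB
            apply hBf
            intro y hy
            rw [hai y hy, haj y hy, ← hai x0 (hsub hx0), ← haj x0 (hsub hx0),
              hAf x0 hx0]
          · exact key_const hf hsub hne hrA hrB φ hφ hcjA hcjB
        · exact key_const hf hsub hne hrA hrB φ hφ hciA hciB
      · -- i, j non-constant; they are A-related but not B-related
        have hcjA : ¬ ConstCoord A j := fun hcj =>
          hciA (constcoord_of_rel hf hne hrij hcj)
        have hciB : ¬ ConstCoord B i := fun hc => hciA (constcoord_mono hsub hc)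
        have hcjB : ¬ ConstCoord B j := fun hc => hcjA (constcoord_mono hsub hc)
        have hnotB : ¬ RelCoord f B i j := by
          rintro ⟨k', hk' | hk'⟩
          · have : k = k' := iterate_eq_iff_of_nocycles hf hnc
              (y := x0 j) (by rw [← hAf x0 hx0, hk' x0 (hsub hx0)])
            exact hBf (this ▸ hk')
          · have hx0i : x0 i = f^[k + k'] (x0 i) := by
              rw [Function.iterate_add_apply, ← hk' x0 (hsub hx0), hAf x0 hx0]
            have hkk' : k + k' = 0 := by
              by_contra h0
              exact hnc (k + k') (Nat.pos_of_ne_zero h0) (x0 i) hx0i.symm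
            have hk0 : k = 0 := by omega
            have hk'0 : k' = 0 := by omega
            apply hBf
            intro y hy
            have := hk' y hy
            rw [hk'0] at this
            rw [hk0]
            simp only [Function.iterate_zero, id] at this ⊢
            exact this.symm
        obtain ⟨b, hb⟩ := hrB.2.2 i hciB
        obtain ⟨b', hb'⟩ := hrB.2.2 j hcjB
        have hbb' : b ≠ b' := by
          rintro rfl
          exact hnotB (relcoord_trans hf hb (relcoord_symm hb'))
        obtain ⟨a, ha⟩ := hrA.2.2 i hciA
        have haj : RelCoord f A j (repA a) :=
          relcoord_trans hf (relcoord_symm hrij) ha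
        have key : ∀ a0 : Fin dA, ∀ i' : Fin n, RelCoord f B i' (repB (φ a0)) →
            RelCoord f A i' (repA a) → a0 = a := by
          intro a0 i' h1 h2
          by_contra hne0
          apply hrA.2.1 a0 a hne0
          have : RelCoord f B (repA a0) i' :=
            relcoord_trans hf (hφ a0) (relcoord_symm h1)
          exact relcoord_trans hf (relcoord_mono hsub this) h2
        by_cases hbφ : ∃ a0, φ a0 = b
        · obtain ⟨a0, ha0⟩ := hbφ
          refine ⟨b', fun a1 ha1 => ?_⟩
          have e0 : a0 = a := key a0 i (ha0 ▸ hb) ha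
          have e1 : a1 = a := key a1 j (ha1 ▸ hb') haj
          exact hbb' (by rw [← ha0, ← ha1, e0, e1])
        · push_neg at hbφ
          exact ⟨b, hbφ⟩
  obtain ⟨b, hb⟩ := hmiss
  have hlt : dA < dB := by
    have := Fintype.card_lt_of_injective_of_notMem φ φinj
      (b := b) (by rintro ⟨a, ha⟩; exact hb a ha)
    simpa using this
  exact ⟨hlt, Nat.ne_of_lt hlt⟩
end

section
/- Let M be a model of T_N. The topology on Mⁿ whose closed sets are generated by finite unions of simple sets (together with ∅ and Mⁿ) is Noetherian: every descending chain of closed sets stabilizes. -/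
open Function Set

namespace Stmt11Aux

attribute [local instance] Classical.propDecidable

variable {M : Type} {f : M → M} {n : ℕ}

lemma nocycles_iter_le (hnc : NoCycles f) (hf : Function.Injective f) {a b : ℕ} {u : M}
    (hab : a ≤ b) (e : f^[a] u = f^[b] u) : a = b := by
  by_contra hne
  have h1 : f^[a] (f^[b - a] u) = f^[a] u := by
    rw [← Function.iterate_add_apply, Nat.add_sub_cancel' hab]
    exact e.symm
  exact hnc (b - a) (by omega) u ((hf.iterate a) h1)

lemma nocycles_iter_eq (hnc : NoCycles f) (hf : Function.Injective f) {a b : ℕ} {u : M}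
    (e : f^[a] u = f^[b] u) : a = b := by
  rcases le_total a b with hab | hab
  · exact nocycles_iter_le hnc hf hab e
  · exact (nocycles_iter_le hnc hf hab e.symm).symm

lemma rel_refl (f : M → M) (X : Set (Fin n → M)) (i : Fin n) : RelCoord f X i i :=
  ⟨0, Or.inl fun _ _ => rfl⟩

lemma rel_symm {X : Set (Fin n → M)} {i j : Fin n} (h : RelCoord f X i j) :
    RelCoord f X j i := by
  obtain ⟨k, hk | hk⟩ := h
  · exact ⟨k, Or.inr hk⟩
  · exact ⟨k, Or.inl hk⟩

lemma rel_trans (hf : Function.Injective f) {X : Set (Fin n → M)} {i j l : Fin n}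
    (h1 : RelCoord f X i j) (h2 : RelCoord f X j l) : RelCoord f X i l := by
  obtain ⟨a, ha⟩ := h1; obtain ⟨b, hb⟩ := h2
  rcases ha with ha | ha <;> rcases hb with hb | hb
  · exact ⟨a + b, Or.inl fun x hx => by
      rw [ha x hx, hb x hx, ← Function.iterate_add_apply]⟩
  · rcases le_total b a with hba | hba
    · refine ⟨a - b, Or.inl fun x hx => ?_⟩
      rw [ha x hx, hb x hx, ← Function.iterate_add_apply, Nat.sub_add_cancel hba]
    · refine ⟨b - a, Or.inr fun x hx => ?_⟩
      rw [hb x hx, ha x hx, ← Function.iterate_add_apply, Nat.sub_add_cancel hba]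
  · rcases le_total a b with hab | hab
    · refine ⟨b - a, Or.inl fun x hx => ?_⟩
      apply hf.iterate a
      rw [← ha x hx, hb x hx, ← Function.iterate_add_apply, Nat.add_sub_cancel' hab]
    · refine ⟨a - b, Or.inr fun x hx => ?_⟩
      apply hf.iterate b
      rw [← hb x hx, ha x hx, ← Function.iterate_add_apply, Nat.add_sub_cancel' hab]
  · exact ⟨b + a, Or.inr fun x hx => by
      rw [hb x hx, ha x hx, ← Function.iterate_add_apply]⟩

lemma const_of_rel (hf : Function.Injective f) {X : Set (Fin n → M)} (hne : X.Nonempty)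
    {i j : Fin n} (hr : RelCoord f X i j) (hc : ConstCoord X j) : ConstCoord X i := by
  obtain ⟨a, ha⟩ := hc
  obtain ⟨k, hk | hk⟩ := hr
  · exact ⟨f^[k] a, fun x hx => by rw [hk x hx, ha x hx]⟩
  · obtain ⟨w, hw⟩ := hne
    refine ⟨w i, fun x hx => hf.iterate k ?_⟩
    rw [← hk x hx, ← hk w hw, ha x hx, ha w hw]

lemma const_mono {X Y : Set (Fin n → M)} (hYX : Y ⊆ X) {i : Fin n}
    (h : ConstCoord X i) : ConstCoord Y i := by
  obtain ⟨a, ha⟩ := h; exact ⟨a, fun y hy => ha y (hYX hy)⟩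

lemma rel_mono {X Y : Set (Fin n → M)} (hYX : Y ⊆ X) {i j : Fin n}
    (h : RelCoord f X i j) : RelCoord f Y i j := by
  obtain ⟨k, hk | hk⟩ := h
  · exact ⟨k, Or.inl fun y hy => hk y (hYX hy)⟩
  · exact ⟨k, Or.inr fun y hy => hk y (hYX hy)⟩

open Classical in
/-- Minimal representatives of classes of non-constant coordinates. -/
noncomputable def reps (f : M → M) (X : Set (Fin n → M)) : Finset (Fin n) :=
  Finset.univ.filter fun i => ¬ ConstCoord X i ∧ ∀ j, j < i → ¬ RelCoord f X i j

lemma mem_reps {X : Set (Fin n → M)} {i : Fin n} :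
    i ∈ reps f X ↔ ¬ ConstCoord X i ∧ ∀ j, j < i → ¬ RelCoord f X i j := by
  simp [reps]

/-- The dimension invariant of a simple set. -/
noncomputable def delta (f : M → M) (X : Set (Fin n → M)) : ℕ := (reps f X).card

lemma delta_le_n (f : M → M) (X : Set (Fin n → M)) : delta f X ≤ n := by
  have := Finset.card_filter_le (Finset.univ : Finset (Fin n))
    (fun i => ¬ ConstCoord X i ∧ ∀ j, j < i → ¬ RelCoord f X i j)
  simpa [delta, reps] using this

open Classical in
/-- The minimal element of the class of `i`. -/
noncomputable def mrep (f : M → M) (X : Set (Fin n → M)) (i : Fin n) : Fin n :=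
  (Finset.univ.filter fun j => RelCoord f X i j).min'
    ⟨i, Finset.mem_filter.mpr ⟨Finset.mem_univ i, rel_refl f X i⟩⟩

lemma rel_mrep (f : M → M) (X : Set (Fin n → M)) (i : Fin n) :
    RelCoord f X i (mrep f X i) := by
  classical
  have := Finset.min'_mem (Finset.univ.filter fun j => RelCoord f X i j)
    ⟨i, Finset.mem_filter.mpr ⟨Finset.mem_univ i, rel_refl f X i⟩⟩
  exact (Finset.mem_filter.mp this).2

lemma mrep_le {X : Set (Fin n → M)} {i j : Fin n} (hj : RelCoord f X i j) :
    mrep f X i ≤ j := by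
  classical
  exact Finset.min'_le _ _ (Finset.mem_filter.mpr ⟨Finset.mem_univ j, hj⟩)

lemma mrep_mem_reps (hf : Function.Injective f) {X : Set (Fin n → M)} (hne : X.Nonempty)
    {i : Fin n} (hci : ¬ ConstCoord X i) : mrep f X i ∈ reps f X := by
  rw [mem_reps]
  refine ⟨fun hc => hci (const_of_rel hf hne (rel_mrep f X i) hc), ?_⟩
  intro j hj hrel
  have : RelCoord f X i j := rel_trans hf (rel_mrep f X i) hrel
  exact (mrep_le this).not_gt hj

lemma reps_eq_of_rel {X : Set (Fin n → M)} {i i' : Fin n}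
    (hi : i ∈ reps f X) (hi' : i' ∈ reps f X) (hr : RelCoord f X i i') : i = i' := by
  by_contra hne
  rcases Ne.lt_or_gt hne with h | h
  · exact (mem_reps.mp hi').2 i h (rel_symm hr)
  · exact (mem_reps.mp hi).2 i' h hr

lemma delta_mono (hf : Function.Injective f) {X Y : Set (Fin n → M)}
    (hne : Y.Nonempty) (hYX : Y ⊆ X) : delta f Y ≤ delta f X := by
  have hXne : X.Nonempty := hne.mono hYX
  refine Finset.card_le_card_of_injOn (fun i => mrep f X i) ?_ ?_
  · intro i hi
    exact mrep_mem_reps hf hXne fun hc => (mem_reps.mp hi).1 (const_mono hYX hc)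
  · intro i hi i' hi' he
    rw [Finset.mem_coe] at hi hi'
    have he' : mrep f X i = mrep f X i' := he
    have h1 : RelCoord f X i i' :=
      rel_trans hf (rel_mrep f X i) (he' ▸ rel_symm (rel_mrep f X i'))
    exact reps_eq_of_rel hi hi' (rel_mono hYX h1)

lemma subset_of_delta_le (hf : Function.Injective f) (hnc : NoCycles f)
    {X Y : Set (Fin n → M)} (hY : IsSimple f Y)
    (hne : Y.Nonempty) (hYX : Y ⊆ X) (hd : delta f X ≤ delta f Y) : X ⊆ Y := by
  obtain ⟨w, hw⟩ := hne
  have hXne : X.Nonempty := ⟨w, hYX hw⟩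
  have hmaps : ∀ i ∈ reps f Y, mrep f X i ∈ reps f X := by
    intro i hi
    exact mrep_mem_reps hf hXne fun hc => (mem_reps.mp hi).1 (const_mono hYX hc)
  have hinj : ∀ i ∈ reps f Y, ∀ i' ∈ reps f Y, mrep f X i = mrep f X i' → i = i' := by
    intro i hi i' hi' he
    have h1 : RelCoord f X i i' :=
      rel_trans hf (rel_mrep f X i) (he ▸ rel_symm (rel_mrep f X i'))
    exact reps_eq_of_rel hi hi' (rel_mono hYX h1)
  have hsurj : ∀ r ∈ reps f X, ∃ i, ∃ _ : i ∈ reps f Y, r = mrep f X i :=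
    Finset.surj_on_of_inj_on_of_card_le (fun i _ => mrep f X i)
      (fun a ha => hmaps a ha) (fun a1 a2 h1 h2 e => hinj a1 h1 a2 h2 e) hd
  have goalA : ∀ i, ConstCoord Y i → ConstCoord X i := by
    intro i hcYi
    by_contra hcXi
    obtain ⟨i', hi', he⟩ := hsurj (mrep f X i) (mrep_mem_reps hf hXne hcXi)
    have h1 : RelCoord f X i i' :=
      rel_trans hf (rel_mrep f X i) (he ▸ rel_symm (rel_mrep f X i'))
    exact (mem_reps.mp hi').1
      (const_of_rel hf ⟨w, hw⟩ (rel_symm (rel_mono hYX h1)) hcYi)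
  have goalB : ∀ i j, ¬ ConstCoord X i → ¬ ConstCoord X j → RelCoord f Y i j →
      RelCoord f X i j := by
    intro i j hci hcj hr
    obtain ⟨i', hi', hei⟩ := hsurj (mrep f X i) (mrep_mem_reps hf hXne hci)
    obtain ⟨j', hj', hej⟩ := hsurj (mrep f X j) (mrep_mem_reps hf hXne hcj)
    have hii' : RelCoord f X i i' :=
      rel_trans hf (rel_mrep f X i) (hei ▸ rel_symm (rel_mrep f X i'))
    have hjj' : RelCoord f X j j' :=
      rel_trans hf (rel_mrep f X j) (hej ▸ rel_symm (rel_mrep f X j'))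
    have hrel' : RelCoord f Y i' j' :=
      rel_trans hf (rel_symm (rel_mono hYX hii'))
        (rel_trans hf hr (rel_mono hYX hjj'))
    have heq : i' = j' := reps_eq_of_rel hi' hj' hrel'
    refine rel_trans hf (rel_mrep f X i) ?_
    rw [hei, heq, ← hej]
    exact rel_symm (rel_mrep f X j)
  obtain ⟨E, Cs, hYd⟩ := hY
  intro x hx
  rw [hYd]
  have hwY := hw
  rw [hYd] at hwY
  simp only [Set.mem_setOf_eq] at hwY ⊢
  constructor
  · rintro ⟨i, j, k⟩ hp
    show x i = f^[k] (x j)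
    have hpY : ∀ y ∈ Y, y i = f^[k] (y j) := by
      intro y hy
      rw [hYd] at hy
      exact hy.1 (i, j, k) hp
    by_cases hcj : ConstCoord X j
    · obtain ⟨a, ha⟩ := hcj
      have hcYi : ConstCoord Y i :=
        ⟨f^[k] a, fun y hy => by rw [hpY y hy, ha y (hYX hy)]⟩
      obtain ⟨b, hb⟩ := goalA i hcYi
      rw [hb x hx, ha x hx, ← ha w (hYX hw), ← hpY w hw, hb w (hYX hw)]
    · by_cases hci : ConstCoord X i
      · exfalso
        obtain ⟨a, ha⟩ := hci
        have hcYj : ConstCoord Y j := by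
          refine ⟨w j, fun y hy => hf.iterate k ?_⟩
          rw [← hpY y hy, ← hpY w hw, ha y (hYX hy), ha w (hYX hw)]
        exact hcj (goalA j hcYj)
      · obtain ⟨k', hk'⟩ := goalB i j hci hcj ⟨k, Or.inl hpY⟩
        rcases hk' with hk' | hk'
        · have hkk : k' = k :=
            nocycles_iter_eq hnc hf ((hk' w (hYX hw)).symm.trans (hpY w hw))
          rw [hk' x hx, hkk]
        · have h0 : (0 : ℕ) = k' + k := by
            refine nocycles_iter_eq hnc hf (u := w j) ?_
            show f^[0] (w j) = f^[k' + k] (w j)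
            rw [Function.iterate_zero_apply, Function.iterate_add_apply, ← hpY w hw]
            exact hk' w (hYX hw)
          have hk0 : k = 0 := by omega
          have hk'0 : k' = 0 := by omega
          have hxji := hk' x hx
          rw [hk'0, Function.iterate_zero_apply] at hxji
          rw [hk0, Function.iterate_zero_apply, hxji]
  · intro q hq
    have hcY : ConstCoord Y q.1 := by
      refine ⟨q.2, fun y hy => ?_⟩
      rw [hYd] at hy
      exact hy.2 q hq
    obtain ⟨a, ha⟩ := goalA q.1 hcY
    rw [ha x hx, ← hwY.2 q hq, ha w (hYX hw)]

lemma delta_lt (hf : Function.Injective f) (hnc : NoCycles f)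
    {X Y : Set (Fin n → M)} (hY : IsSimple f Y) (hne : Y.Nonempty)
    (hsub : Y ⊆ X) (hssne : Y ≠ X) : delta f Y < delta f X := by
  rcases lt_or_eq_of_le (delta_mono hf hne hsub) with h | h
  · exact h
  · exact absurd (Set.Subset.antisymm hsub
      (subset_of_delta_le hf hnc hY hne hsub h.ge)) hssne

lemma hasChain_le (hf : Function.Injective f) (hnc : NoCycles f)
    {A : Set (Fin n → M)} {d : ℕ} (h : HasChain f A d) : d ≤ n := by
  obtain ⟨W, hm, hsn, _⟩ := h
  have key : ∀ i : Fin (d + 1), (i : ℕ) ≤ delta f (W i) := by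
    intro i
    induction i using Fin.induction with
    | zero => exact Nat.zero_le _
    | succ i ih =>
      have hlt : W i.castSucc < W i.succ := hm (Fin.castSucc_lt_succ : i.castSucc < i.succ)
      have h1 : delta f (W i.castSucc) < delta f (W i.succ) :=
        delta_lt hf hnc (hsn i.castSucc).1 (hsn i.castSucc).2 hlt.le hlt.ne
      have h2 : ((i.castSucc : Fin (d + 1)) : ℕ) = (i : ℕ) := rfl
      rw [Fin.val_succ]
      omega
  have h3 := key (Fin.last d)
  have h4 := delta_le_n f (W (Fin.last d))
  simp only [Fin.val_last] at h3
  omega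

lemma hasChain_zero {X : Set (Fin n → M)} (hX : IsSimple f X) (hne : X.Nonempty) :
    HasChain f X 0 := by
  refine ⟨fun _ => X, ?_, fun _ => ⟨hX, hne⟩, subset_rfl⟩
  intro a b hab
  have ha := a.isLt
  have hb := b.isLt
  rw [Fin.lt_def] at hab
  omega

lemma not_hasChain_empty {d : ℕ} : ¬ HasChain f (∅ : Set (Fin n → M)) d := by
  rintro ⟨W, _, hsn, hl⟩
  obtain ⟨y, hy⟩ := (hsn (Fin.last d)).2
  exact Set.notMem_empty y (hl hy)

lemma hasChain_succ_of_lt {s X : Set (Fin n → M)} {k : ℕ} (hX : IsSimple f X)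
    (hsub : s ⊆ X) (hne : s ≠ X) (h : HasChain f s k) : HasChain f X (k + 1) := by
  obtain ⟨W, hm, hsn, hl⟩ := h
  have hsltX : s < X := lt_of_le_of_ne hsub hne
  refine ⟨Fin.snoc W X, ?_, ?_, ?_⟩
  · rw [Fin.strictMono_iff_lt_succ]
    intro i
    refine Fin.lastCases ?_ ?_ i
    · rw [Fin.succ_last, Fin.snoc_last, Fin.snoc_castSucc]
      exact lt_of_le_of_lt (le_trans (hl : W (Fin.last k) ≤ s) le_rfl) hsltX
    · intro i0
      rw [Fin.succ_castSucc, Fin.snoc_castSucc, Fin.snoc_castSucc]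
      exact hm (Fin.castSucc_lt_succ : i0.castSucc < i0.succ)
  · refine Fin.lastCases ?_ ?_
    · rw [Fin.snoc_last]
      exact ⟨hX, ((hsn (Fin.last k)).2).mono (hl.trans hsub)⟩
    · intro i
      rw [Fin.snoc_castSucc]
      exact hsn i
  · rw [Fin.snoc_last]

lemma simple_inter {A B : Set (Fin n → M)} (h1 : IsSimple f A) (h2 : IsSimple f B) :
    IsSimple f (A ∩ B) := by
  obtain ⟨E1, C1, hA⟩ := h1; obtain ⟨E2, C2, hB⟩ := h2
  refine ⟨E1 ++ E2, C1 ++ C2, ?_⟩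
  rw [hA, hB]; ext x
  simp only [Set.mem_inter_iff, Set.mem_setOf_eq, List.mem_append]
  constructor
  · rintro ⟨⟨hE1, hC1⟩, hE2, hC2⟩
    exact ⟨fun p hp => hp.elim (hE1 p) (hE2 p), fun q hq => hq.elim (hC1 q) (hC2 q)⟩
  · rintro ⟨hE, hC⟩
    exact ⟨⟨fun p hp => hE p (Or.inl hp), fun q hq => hC q (Or.inl hq)⟩,
      fun p hp => hE p (Or.inr hp), fun q hq => hC q (Or.inr hq)⟩

lemma closed_inter_simple {A s : Set (Fin n → M)} (hA : ClosedInTop f A)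
    (hs : IsSimple f s) : ClosedInTop f (A ∩ s) := by
  obtain ⟨l, hl, hAd⟩ := hA
  refine ⟨l.map (· ∩ s), ?_, ?_⟩
  · intro t ht
    obtain ⟨u, hu, rfl⟩ := List.mem_map.mp ht
    exact simple_inter (hl u hu) hs
  · rw [hAd]; ext x
    simp only [Set.mem_inter_iff, Set.mem_setOf_eq, List.mem_map]
    constructor
    · rintro ⟨⟨u, hu, hxu⟩, hxs⟩
      exact ⟨u ∩ s, ⟨u, hu, rfl⟩, hxu, hxs⟩
    · rintro ⟨t, ⟨u, hu, rfl⟩, hxu, hxs⟩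
      exact ⟨⟨u, hu, hxu⟩, hxs⟩

lemma exists_uniform {α β : Type*} (l : List α) (F : α → ℕ → β)
    (h : ∀ s ∈ l, ∃ K, ∀ m, K ≤ m → F s m = F s K) :
    ∃ K, ∀ s ∈ l, ∀ m, K ≤ m → F s m = F s K := by
  induction l with
  | nil => exact ⟨0, fun s hs => absurd hs List.not_mem_nil⟩
  | cons a l ih =>
    obtain ⟨Ka, ha⟩ := h a List.mem_cons_self
    obtain ⟨Kl, hl⟩ := ih fun s hs => h s (List.mem_cons_of_mem a hs)
    refine ⟨max Ka Kl, fun s hs m hm => ?_⟩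
    rcases List.mem_cons.mp hs with rfl | hs
    · rw [ha m (le_trans (le_max_left _ _) hm), ha (max Ka Kl) (le_max_left _ _)]
    · rw [hl s hs m (le_trans (le_max_right _ _) hm), hl s hs (max Ka Kl) (le_max_right _ _)]

lemma stab (hf : Function.Injective f) (hnc : NoCycles f) :
    ∀ k : ℕ, ∀ X : Set (Fin n → M), IsSimple f X → ¬ HasChain f X k →
    ∀ Z : ℕ → Set (Fin n → M), (∀ m, ClosedInTop f (Z m)) → (∀ m, Z (m + 1) ⊆ Z m) →
    (∀ m, Z m ⊆ X) → ∃ K, ∀ m, K ≤ m → Z m = Z K := by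
  intro k
  induction k with
  | zero =>
    intro X hX hch Z _ _ hsub
    by_cases hne : X.Nonempty
    · exact absurd (hasChain_zero hX hne) hch
    · rw [Set.not_nonempty_iff_eq_empty] at hne
      refine ⟨0, fun m _ => ?_⟩
      have h1 : Z m = ∅ := Set.eq_empty_of_subset_empty (hne ▸ hsub m)
      have h2 : Z 0 = ∅ := Set.eq_empty_of_subset_empty (hne ▸ hsub 0)
      rw [h1, h2]
  | succ k ih =>
    intro X hX hch Z hcl hdec hsub
    by_cases hall : ∀ m, X ⊆ Z m
    · exact ⟨0, fun m _ =>
        (Set.Subset.antisymm (hsub m) (hall m)).trans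
          (Set.Subset.antisymm (hsub 0) (hall 0)).symm⟩
    · push_neg at hall
      obtain ⟨m0, hm0⟩ := hall
      obtain ⟨l, hlsimp, hZm0⟩ := hcl m0
      have hanti : Antitone Z := antitone_nat_of_succ_le fun m => hdec m
      have hpiece : ∀ s ∈ l, s ⊆ Z m0 := by
        intro s hs x hxs
        rw [hZm0]
        exact ⟨s, hs, hxs⟩
      have key : ∀ s ∈ l, ∃ K, ∀ m, K ≤ m → Z (m0 + m) ∩ s = Z (m0 + K) ∩ s := by
        intro s hs
        have hsX : s ⊆ X := (hpiece s hs).trans (hsub m0)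
        have hsnX : s ≠ X := fun e => hm0 (e ▸ hpiece s hs)
        have hnochain : ¬ HasChain f s k := fun hc =>
          hch (hasChain_succ_of_lt hX hsX hsnX hc)
        exact ih s (hlsimp s hs) hnochain (fun m => Z (m0 + m) ∩ s)
          (fun m => closed_inter_simple (hcl (m0 + m)) (hlsimp s hs))
          (fun m => Set.inter_subset_inter (hdec (m0 + m)) subset_rfl)
          (fun m => Set.inter_subset_right)
      obtain ⟨K', hK'⟩ := exists_uniform l (fun s m => Z (m0 + m) ∩ s) key
      refine ⟨m0 + K', fun m hm => ?_⟩
      have hmem : ∀ x, x ∈ Z m → x ∈ Z (m0 + K') := by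
        intro x hx
        have hx0 : x ∈ Z m0 := hanti (by omega : m0 ≤ m) hx
        rw [hZm0] at hx0
        obtain ⟨s, hs, hxs⟩ := hx0
        have e1 := hK' s hs (m - m0) (by omega)
        rw [(by omega : m0 + (m - m0) = m)] at e1
        have : x ∈ Z (m0 + K') ∩ s := by rw [← e1]; exact ⟨hx, hxs⟩
        exact this.1
      have hmem' : ∀ x, x ∈ Z (m0 + K') → x ∈ Z m := by
        intro x hx
        have hx0 : x ∈ Z m0 := hanti (by omega : m0 ≤ m0 + K') hx
        rw [hZm0] at hx0
        obtain ⟨s, hs, hxs⟩ := hx0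
        have e1 := hK' s hs (m - m0) (by omega)
        rw [(by omega : m0 + (m - m0) = m)] at e1
        have : x ∈ Z m ∩ s := by rw [e1]; exact ⟨hx, hxs⟩
        exact this.1
      exact Set.Subset.antisymm hmem hmem'

end Stmt11Aux

/-- In a model of `T_N`, the topology on `M^n` whose closed sets are generated by the
simple sets (i.e. are the finite unions of simple sets) is Noetherian: every descending
chain of closed sets stabilizes. -/
theorem stmt_11 {M : Type} (N : ℕ) (f : M → M) (c : Fin N → M)
    (h : ModelTN N M f c) {n : ℕ}
    (Z : ℕ → Set (Fin n → M))
    (hcl : ∀ m : ℕ, ClosedInTop f (Z m))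
    (hdec : ∀ m : ℕ, Z (m+1) ⊆ Z m) :
    ∃ K : ℕ, ∀ m : ℕ, K ≤ m → Z m = Z K := by
  have hf := h.finj
  have hnc := h.nocycles
  obtain ⟨l, hlsimp, hZ0⟩ := hcl 0
  have hanti : Antitone Z := antitone_nat_of_succ_le fun m => hdec m
  have key : ∀ s ∈ l, ∃ K, ∀ m, K ≤ m → Z m ∩ s = Z K ∩ s := by
    intro s hs
    have hnochain : ¬ HasChain f s (n + 1) := fun hc => by
      have := Stmt11Aux.hasChain_le hf hnc hc
      omega
    exact Stmt11Aux.stab hf hnc (n + 1) s (hlsimp s hs) hnochain (fun m => Z m ∩ s)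
      (fun m => Stmt11Aux.closed_inter_simple (hcl m) (hlsimp s hs))
      (fun m => Set.inter_subset_inter (hdec m) subset_rfl)
      (fun m => Set.inter_subset_right)
  obtain ⟨K, hK⟩ := Stmt11Aux.exists_uniform l (fun s m => Z m ∩ s) key
  refine ⟨K, fun m hm => ?_⟩
  apply Set.Subset.antisymm
  · intro x hx
    have hx0 : x ∈ Z 0 := hanti (Nat.zero_le m) hx
    rw [hZ0] at hx0
    obtain ⟨s, hs, hxs⟩ := hx0
    have e1 := hK s hs m hm
    have hmem : x ∈ Z K ∩ s := by
      have : x ∈ Z m ∩ s := ⟨hx, hxs⟩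
      simpa [e1] using this
    exact hmem.1
  · intro x hx
    have hx0 : x ∈ Z 0 := hanti (Nat.zero_le K) hx
    rw [hZ0] at hx0
    obtain ⟨s, hs, hxs⟩ := hx0
    have e1 := hK s hs m hm
    have hmem : x ∈ Z m ∩ s := by
      have : x ∈ Z K ∩ s := ⟨hx, hxs⟩
      simpa [e1] using this
    exact hmem.1
end

section
/- In the Noetherian topology on Mⁿ generated by the simple sets, the irreducible closed sets are exactly the nonempty simple sets. -/
open Function Set

section Aux

variable {M : Type} {f : M → M}

lemma iter_cancel (hf : Function.Injective f) (hnc : NoCycles f) {a b : ℕ} {u : M}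
    (h : f^[a] u = f^[b] u) : a = b := by
  have aux : ∀ a b : ℕ, a ≤ b → ∀ u : M, f^[a] u = f^[b] u → a = b := by
    intro a b hab u h
    obtain ⟨d, rfl⟩ := Nat.exists_eq_add_of_le hab
    have h2 : f^[a] u = f^[a] (f^[d] u) := by
      rw [h, Function.iterate_add_apply]
    have hd : f^[d] u = u := ((hf.iterate a) h2).symm
    by_contra hne
    exact hnc d (Nat.pos_of_ne_zero (by omega)) u hd
  rcases Nat.le_total a b with hab | hab
  · exact aux a b hab u h
  · exact (aux b a hab u h.symm).symm

lemma key_lemma (hf : Function.Injective f) (hnc : NoCycles f)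
    {n : ℕ} {A : Set (Fin n → M)} (hA : IsSimple f A) (hne : A.Nonempty)
    (l : List (Set (Fin n → M))) (hl : ∀ s ∈ l, IsSimple f s)
    (hcov : ∀ x ∈ A, ∃ s ∈ l, x ∈ s) : ∃ B ∈ l, A ⊆ B := by
  classical
  obtain ⟨E, Cs, hAdef⟩ := hA
  obtain ⟨p, hp⟩ := hne
  have hmem : ∀ x, x ∈ A ↔ ((∀ q ∈ E, x q.1 = f^[q.2.2] (x q.2.1)) ∧ (∀ q ∈ Cs, x q.1 = q.2)) :=
    fun x => by rw [hAdef]; exact Iff.rfl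
  set R : Fin n → Fin n → Prop := Relation.EqvGen (fun i j => ∃ k, (i, j, k) ∈ E) with hR
  have hRequiv : Equivalence R := Relation.EqvGen.is_equivalence _
  -- L1: related coordinates have a rigid relation on all of A
  have L1 : ∀ i j, R i j → ∃ a b : ℕ, ∀ x ∈ A, f^[a] (x i) = f^[b] (x j) := by
    intro i j hij
    induction hij with
    | rel i j he =>
      obtain ⟨k, hk⟩ := he
      exact ⟨0, k, fun x hx => by simpa using ((hmem x).mp hx).1 (i, j, k) hk⟩
    | refl i => exact ⟨0, 0, fun x _ => rfl⟩
    | symm i j _ ih =>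
      obtain ⟨a, b, hab⟩ := ih
      exact ⟨b, a, fun x hx => (hab x hx).symm⟩
    | trans i j m _ _ ih1 ih2 =>
      obtain ⟨a, b, hab⟩ := ih1
      obtain ⟨a', b', hab'⟩ := ih2
      refine ⟨a' + a, b + b', fun x hx => ?_⟩
      calc f^[a' + a] (x i) = f^[a'] (f^[a] (x i)) := Function.iterate_add_apply f a' a _
        _ = f^[a'] (f^[b] (x j)) := by rw [hab x hx]
        _ = f^[b] (f^[a'] (x j)) := by
              rw [← Function.iterate_add_apply, ← Function.iterate_add_apply, Nat.add_comm]
        _ = f^[b] (f^[b'] (x m)) := by rw [hab' x hx]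
        _ = f^[b + b'] (x m) := (Function.iterate_add_apply f b b' _).symm
  -- Fixed coordinates
  set Fixed : Fin n → Prop := fun i => ∃ q m, (q, m) ∈ Cs ∧ R i q with hFix
  have hconst : ∀ i, Fixed i → ∀ x ∈ A, x i = p i := by
    rintro i ⟨q, m, hqm, hiq⟩ x hx
    obtain ⟨a, b, hab⟩ := L1 i q hiq
    have hxq : x q = m := ((hmem x).mp hx).2 (q, m) hqm
    have hpq : p q = m := ((hmem p).mp hp).2 (q, m) hqm
    have hx1 : f^[a] (x i) = f^[b] m := by rw [← hxq]; exact hab x hx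
    have hp1 : f^[a] (p i) = f^[b] m := by rw [← hpq]; exact hab p hp
    exact (hf.iterate a) (hx1.trans hp1.symm)
  have hFixedR : ∀ i j, R i j → (Fixed i ↔ Fixed j) := by
    intro i j hij
    constructor
    · rintro ⟨q, m, hqm, hiq⟩; exact ⟨q, m, hqm, hRequiv.trans (hRequiv.symm hij) hiq⟩
    · rintro ⟨q, m, hqm, hjq⟩; exact ⟨q, m, hqm, hRequiv.trans hij hjq⟩
  -- weights
  obtain ⟨w, hwpos, hwiff⟩ : ∃ w : Fin n → ℕ, (∀ i, 0 < w i) ∧ (∀ i j, R i j ↔ w i = w j) := by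
    have hSne : ∀ i : Fin n, (Finset.univ.filter (fun j => R i j)).Nonempty :=
      fun i => ⟨i, by simp [hRequiv.refl i]⟩
    refine ⟨fun i => ((Finset.univ.filter (fun j => R i j)).min' (hSne i) : Fin n).val + 1,
      fun i => Nat.succ_pos _, fun i j => ?_⟩
    constructor
    · intro hij
      have hS : (Finset.univ.filter (fun j' => R i j')) = (Finset.univ.filter (fun j' => R j j')) := by
        ext m; simp only [Finset.mem_filter, Finset.mem_univ, true_and]
        exact ⟨fun h => hRequiv.trans (hRequiv.symm hij) h, fun h => hRequiv.trans hij h⟩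
      simp only [hS]
    · intro hw
      have h1 := (Finset.univ.filter (fun j' => R i j')).min'_mem (hSne i)
      have h2 := (Finset.univ.filter (fun j' => R j j')).min'_mem (hSne j)
      simp only [Finset.mem_filter, Finset.mem_univ, true_and] at h1 h2
      have : ((Finset.univ.filter (fun j' => R i j')).min' (hSne i)) =
          ((Finset.univ.filter (fun j' => R j j')).min' (hSne j)) := by
        have := Nat.succ_injective hw
        exact Fin.val_injective this
      exact hRequiv.trans h1 (hRequiv.symm (this ▸ h2))
  -- the generic family
  set xt : ℕ → Fin n → M := fun t i => if Fixed i then p i else f^[t * w i] (p i) with hxt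
  have hxtA : ∀ t, xt t ∈ A := by
    intro t
    rw [hmem]
    constructor
    · rintro ⟨i, j, k⟩ hq
      have hRij : R i j := Relation.EqvGen.rel i j ⟨k, hq⟩
      have hpij : p i = f^[k] (p j) := ((hmem p).mp hp).1 (i, j, k) hq
      by_cases hFi : Fixed i
      · have hFj : Fixed j := (hFixedR i j hRij).mp hFi
        simp only [hxt, if_pos hFi, if_pos hFj]
        exact hpij
      · have hFj : ¬ Fixed j := fun h => hFi ((hFixedR i j hRij).mpr h)
        have hwij : w i = w j := (hwiff i j).mp hRij
        simp only [hxt, if_neg hFi, if_neg hFj]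
        rw [hpij, hwij, ← Function.iterate_add_apply, ← Function.iterate_add_apply, Nat.add_comm]
    · rintro ⟨i, m⟩ hq
      have hFi : Fixed i := ⟨i, m, hq, hRequiv.refl i⟩
      simp only [hxt, if_pos hFi]
      exact ((hmem p).mp hp).2 (i, m) hq
  -- genericity: constants
  have hgenC : ∀ (i : Fin n) (m : M) (s t : ℕ), s ≠ t → xt s i = m → xt t i = m →
      ∀ x ∈ A, x i = m := by
    intro i m s t hst hs ht x hx
    by_cases hFi : Fixed i
    · simp only [hxt, if_pos hFi] at hs
      rw [hconst i hFi x hx, hs]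
    · simp only [hxt, if_neg hFi] at hs ht
      exfalso
      have := iter_cancel hf hnc (hs.trans ht.symm)
      exact hst (Nat.eq_of_mul_eq_mul_right (hwpos i) this)
  -- genericity: relations
  have hgenE : ∀ (i j : Fin n) (k : ℕ) (s t : ℕ), s ≠ t →
      xt s i = f^[k] (xt s j) → xt t i = f^[k] (xt t j) →
      ∀ x ∈ A, x i = f^[k] (x j) := by
    intro i j k s t hst hs ht x hx
    by_cases hFi : Fixed i <;> by_cases hFj : Fixed j
    · simp only [hxt, if_pos hFi, if_pos hFj] at hs
      rw [hconst i hFi x hx, hconst j hFj x hx, hs]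
    · exfalso
      simp only [hxt, if_pos hFi, if_neg hFj] at hs ht
      rw [← Function.iterate_add_apply] at hs ht
      have := iter_cancel hf hnc (hs.symm.trans ht)
      have : s * w j = t * w j := by omega
      exact hst (Nat.eq_of_mul_eq_mul_right (hwpos j) this)
    · exfalso
      simp only [hxt, if_neg hFi, if_pos hFj] at hs ht
      have := iter_cancel hf hnc (hs.trans ht.symm)
      exact hst (Nat.eq_of_mul_eq_mul_right (hwpos i) this)
    · simp only [hxt, if_neg hFi, if_neg hFj] at hs ht
      rw [← Function.iterate_add_apply] at hs ht
      by_cases hwij : w i = w j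
      · -- same class
        have hRij : R i j := (hwiff i j).mpr hwij
        have hpij : p i = f^[k] (p j) := by
          apply hf.iterate (s * w i)
          rw [← Function.iterate_add_apply, Nat.add_comm (s * w i) k, hs, hwij]
        obtain ⟨a, b, hab⟩ := L1 i j hRij
        have hpab : f^[a + k] (p j) = f^[b] (p j) := by
          rw [Function.iterate_add_apply, ← hpij]; exact hab p hp
        have hakb : a + k = b := iter_cancel hf hnc hpab
        apply hf.iterate a
        rw [← Function.iterate_add_apply, hakb]
        exact hab x hx
      · exfalso
        have claim : ∀ s t : ℕ, s < t →
            f^[s * w i] (p i) = f^[k + s * w j] (p j) →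
            f^[t * w i] (p i) = f^[k + t * w j] (p j) → False := by
          intro s t hlt hs' ht'
          have h1 : f^[(t - s) * w i] (f^[s * w i] (p i)) =
              f^[(t - s) * w i] (f^[k + s * w j] (p j)) := by rw [hs']
          rw [← Function.iterate_add_apply, ← Function.iterate_add_apply] at h1
          have he1 : (t - s) * w i + s * w i = t * w i := by
            rw [← Nat.add_mul, Nat.sub_add_cancel hlt.le]
          rw [he1, ht'] at h1
          have h2 := iter_cancel hf hnc h1
          -- k + t * w j = (t - s) * w i + (k + s * w j)
          have htj : t * w j = (t - s) * w j + s * w j := by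
            rw [← Nat.add_mul, Nat.sub_add_cancel hlt.le]
          have h3 : (t - s) * w j = (t - s) * w i := by omega
          have hts : 0 < t - s := by omega
          exact hwij (Nat.eq_of_mul_eq_mul_left hts h3.symm)
        rcases Nat.lt_or_ge s t with hlt | hge
        · exact claim s t hlt hs ht
        · exact claim t s (by omega) ht hs
  -- main: a simple set containing two distinct generic points contains A
  have main : ∀ B : Set (Fin n → M), IsSimple f B → ∀ s t : ℕ, s ≠ t →
      xt s ∈ B → xt t ∈ B → A ⊆ B := by
    rintro B ⟨E', Cs', hB⟩ s t hst hsB htB x hx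
    rw [hB] at hsB htB ⊢
    obtain ⟨hsE, hsC⟩ := hsB
    obtain ⟨htE, htC⟩ := htB
    constructor
    · intro q hq
      exact hgenE q.1 q.2.1 q.2.2 s t hst (hsE q hq) (htE q hq) x hx
    · intro q hq
      exact hgenC q.1 q.2 s t hst (hsC q hq) (htC q hq) x hx
  -- pigeonhole
  have hchoice : ∀ t : ℕ, ∃ i : Fin l.length, xt t ∈ l.get i := by
    intro t
    obtain ⟨s, hsl, hxs⟩ := hcov _ (hxtA t)
    obtain ⟨i, hi⟩ := List.mem_iff_get.mp hsl
    exact ⟨i, hi ▸ hxs⟩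
  choose g hg using hchoice
  obtain ⟨s, t, hst, hgst⟩ := Finite.exists_ne_map_eq_of_infinite g
  refine ⟨l.get (g s), (l.get_mem (g s) : l.get ⟨(g s).1, (g s).2⟩ ∈ l), ?_⟩
  exact main _ (hl _ ((l.get_mem (g s) : l.get ⟨(g s).1, (g s).2⟩ ∈ l))) s t hst (hg s) (hgst ▸ hg t)

end Aux

section Aux2
variable {M : Type} {f : M → M}

lemma simple_closed {n : ℕ} {B : Set (Fin n → M)} (hB : IsSimple f B) : ClosedInTop f B :=
  ⟨[B], by simpa using hB, by ext x; simp⟩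

lemma pick_lemma {n : ℕ} {A : Set (Fin n → M)} (hne : A.Nonempty)
    (hirr : ∀ F G : Set (Fin n → M), ClosedInTop f F → ClosedInTop f G →
      F ⊂ A → G ⊂ A → A ≠ F ∪ G) :
    ∀ l : List (Set (Fin n → M)), (∀ s ∈ l, IsSimple f s) →
      A = {x | ∃ s ∈ l, x ∈ s} → ∃ B ∈ l, A = B := by
  intro l
  induction l with
  | nil =>
    intro _ hu
    exfalso
    obtain ⟨x, hx⟩ := hne
    rw [hu] at hx
    simp at hx
  | cons B l' ih =>
    intro hsimp hunion
    have hBA : B ⊆ A := by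
      rw [hunion]; intro x hx; exact ⟨B, by simp, hx⟩
    by_cases hAB : A ⊆ B
    · exact ⟨B, by simp, subset_antisymm hAB hBA⟩
    · have hGA : {x | ∃ s ∈ l', x ∈ s} ⊆ A := by
        rw [hunion]; rintro x ⟨s, hs, hxs⟩; exact ⟨s, by simp [hs], hxs⟩
      by_cases hAG : A ⊆ {x | ∃ s ∈ l', x ∈ s}
      · obtain ⟨B', hB', hAB'⟩ := ih (fun s hs => hsimp s (by simp [hs]))
          (subset_antisymm hAG hGA)
        exact ⟨B', by simp [hB'], hAB'⟩
      · exfalso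
        apply hirr B {x | ∃ s ∈ l', x ∈ s} (simple_closed (hsimp B (by simp)))
          ⟨l', fun s hs => hsimp s (by simp [hs]), rfl⟩
          ⟨hBA, hAB⟩
          ⟨hGA, hAG⟩
        rw [hunion]
        ext x
        simp [Set.mem_union]

end Aux2


/-- In the Noetherian topology on `M^n` generated by the simple sets (for `M` a model
of `T_N`), the irreducible closed sets (nonempty closed sets that are not the union of
two proper closed subsets) are exactly the nonempty simple sets. -/
theorem stmt_12 {M : Type} (N : ℕ) (f : M → M) (c : Fin N → M)
    (h : ModelTN N M f c) {n : ℕ} (A : Set (Fin n → M)) :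
    (ClosedInTop f A ∧ A.Nonempty ∧
      ∀ F G : Set (Fin n → M), ClosedInTop f F → ClosedInTop f G →
        F ⊂ A → G ⊂ A → A ≠ F ∪ G)
    ↔ (IsSimple f A ∧ A.Nonempty) := by
  constructor
  · rintro ⟨⟨l, hl, hA⟩, hne, hirr⟩
    obtain ⟨B, hBl, hAB⟩ := pick_lemma hne hirr l hl hA
    exact ⟨hAB ▸ hl B hBl, hne⟩
  · rintro ⟨hsimp, hne⟩
    refine ⟨simple_closed hsimp, hne, ?_⟩
    intro F G hF hG hFA hGA heq
    obtain ⟨lF, hlF, hFdef⟩ := hF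
    obtain ⟨lG, hlG, hGdef⟩ := hG
    have hcov : ∀ x ∈ A, ∃ s ∈ lF ++ lG, x ∈ s := by
      intro x hx
      rw [heq] at hx
      rcases hx with hx | hx
      · rw [hFdef] at hx
        obtain ⟨s, hs, hxs⟩ := hx
        exact ⟨s, List.mem_append.mpr (Or.inl hs), hxs⟩
      · rw [hGdef] at hx
        obtain ⟨s, hs, hxs⟩ := hx
        exact ⟨s, List.mem_append.mpr (Or.inr hs), hxs⟩
    obtain ⟨B, hBmem, hAB⟩ := key_lemma h.finj h.nocycles hsimp hne (lF ++ lG)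
      (fun s hs => (List.mem_append.mp hs).elim (hlF s) (hlG s)) hcov
    rcases List.mem_append.mp hBmem with hB | hB
    · have hAF : A ⊆ F := hAB.trans (by rw [hFdef]; intro x hx; exact ⟨B, hB, hx⟩)
      exact hFA.2 hAF
    · have hAG : A ⊆ G := hAB.trans (by rw [hGdef]; intro x hx; exact ⟨B, hB, hx⟩)
      exact hGA.2 hAG
end

section
/- Let A ⊆ Mⁿ be a simple set of topological dimension d (i.e., the longest chain ∅ ⊊ Z₀ ⊊ ... ⊊ Z_d = A of simple sets has length d). Then d equals the number of equivalence classes of A, and hence A is in definable bijection with M^d. -/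
open Function Set

namespace TNAux

variable {M : Type} {f : M → M}

/-- Basic cancellation: from injectivity and no cycles. -/
lemma cancel (hf : Function.Injective f) (hnc : NoCycles f) {a b : ℕ} {z : M}
    (h : f^[a] z = f^[b] z) : a = b := by
  rcases le_total a b with hab | hab
  · by_contra hne
    have hb : b = a + (b - a) := by omega
    rw [hb, Function.iterate_add_apply] at h
    have : f^[b-a] z = z := (hf.iterate a) h.symm
    exact hnc (b - a) (by omega) z this
  · by_contra hne
    have ha : a = b + (a - b) := by omega
    rw [ha, Function.iterate_add_apply] at h
    have : f^[a-b] z = z := (hf.iterate b) h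
    exact hnc (a - b) (by omega) z this

variable {n : ℕ}

/-- Two-sided relation between coordinates. -/
def SC (f : M → M) (Z : Set (Fin n → M)) (i j : Fin n) : Prop :=
  ∃ p q : ℕ, ∀ x ∈ Z, f^[p] (x i) = f^[q] (x j)

lemma SC.refl (Z : Set (Fin n → M)) (i : Fin n) : SC f Z i i := ⟨0, 0, fun _ _ => rfl⟩

lemma SC.symm {Z : Set (Fin n → M)} {i j : Fin n} (h : SC f Z i j) : SC f Z j i := by
  obtain ⟨p, q, h⟩ := h; exact ⟨q, p, fun x hx => (h x hx).symm⟩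

lemma SC.trans {Z : Set (Fin n → M)} {i j k : Fin n} (h1 : SC f Z i j) (h2 : SC f Z j k) :
    SC f Z i k := by
  obtain ⟨p1, q1, h1⟩ := h1
  obtain ⟨p2, q2, h2⟩ := h2
  refine ⟨p2 + p1, q1 + q2, fun x hx => ?_⟩
  calc f^[p2 + p1] (x i) = f^[p2] (f^[q1] (x j)) := by
        rw [Function.iterate_add_apply, h1 x hx]
      _ = f^[q1] (f^[p2] (x j)) := by rw [← Function.iterate_add_apply,
        Nat.add_comm, Function.iterate_add_apply]
      _ = f^[q1 + q2] (x k) := by rw [h2 x hx, ← Function.iterate_add_apply]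

/-- A one-sided relation from a two-sided one. -/
lemma SC.one_sided (hf : Function.Injective f) {Z : Set (Fin n → M)} {i j : Fin n}
    (h : SC f Z i j) :
    ∃ k : ℕ, (∀ x ∈ Z, x i = f^[k] (x j)) ∨ (∀ x ∈ Z, x j = f^[k] (x i)) := by
  obtain ⟨p, q, h⟩ := h
  rcases le_total p q with hpq | hpq
  · refine ⟨q - p, Or.inl fun x hx => hf.iterate p ?_⟩
    rw [h x hx, ← Function.iterate_add_apply]
    congr 1; omega
  · refine ⟨p - q, Or.inr fun x hx => hf.iterate q ?_⟩
    rw [← h x hx, ← Function.iterate_add_apply]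
    congr 1; omega

lemma SC.of_rel {Z : Set (Fin n → M)} {i j : Fin n} {k : ℕ}
    (h : ∀ x ∈ Z, x i = f^[k] (x j)) : SC f Z i j :=
  ⟨0, k, fun x hx => h x hx⟩

lemma relCoord_iff_sc (hf : Function.Injective f) {Z : Set (Fin n → M)} {i j : Fin n} :
    RelCoord f Z i j ↔ SC f Z i j := by
  constructor
  · rintro ⟨k, h | h⟩
    · exact SC.of_rel h
    · exact (SC.of_rel h).symm
  · exact fun h => h.one_sided hf

/-- Constancy propagates along `SC` (given a point of `Z` to supply the value). -/
lemma const_of_sc {Z : Set (Fin n → M)} {w : Fin n → M} (hw : w ∈ Z)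
    (hf : Function.Injective f) {i j : Fin n} (hsc : SC f Z i j)
    (hc : ConstCoord Z i) : ConstCoord Z j := by
  obtain ⟨a, ha⟩ := hc
  obtain ⟨p, q, h⟩ := hsc
  refine ⟨w j, fun x hx => hf.iterate q ?_⟩
  rw [← h x hx, ← h w hw, ha x hx, ha w hw]

end TNAux

namespace TNAux

variable {M : Type} {f : M → M} {n : ℕ}

/-- `r` is a root: non-constant, and every coordinate in its class is a forward
iterate of it. -/
def IsRoot (f : M → M) (Z : Set (Fin n → M)) (r : Fin n) : Prop :=
  ¬ ConstCoord Z r ∧ ∀ j, SC f Z j r → ∃ k, ∀ x ∈ Z, x j = f^[k] (x r)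

/-- `R` is a set of roots, one per class of non-constant coordinates. -/
def RootSet (f : M → M) (Z : Set (Fin n → M)) (R : Finset (Fin n)) : Prop :=
  (∀ r ∈ R, IsRoot f Z r) ∧
  (∀ r ∈ R, ∀ s ∈ R, SC f Z r s → r = s) ∧
  (∀ i, ¬ ConstCoord Z i → ∃ r ∈ R, SC f Z i r)

open Classical in
/-- Every non-constant coordinate has a root in its class. -/
lemma exists_root (hf : Function.Injective f) {Z : Set (Fin n → M)} (i : Fin n)
    (hi : ¬ ConstCoord Z i) (hw : Z.Nonempty) :
    ∃ r, IsRoot f Z r ∧ SC f Z i r := by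
  obtain ⟨w, hw⟩ := hw
  -- the class of i
  set S : Finset (Fin n) := Finset.univ.filter (fun j => SC f Z j i) with hS
  have hiS : i ∈ S := by simp [hS, SC.refl]
  -- choice of witnessing exponents
  have hch : ∀ j ∈ S, ∃ p q : ℕ, ∀ x ∈ Z, f^[p] (x j) = f^[q] (x i) := by
    intro j hj
    simp only [hS, Finset.mem_filter] at hj
    exact hj.2
  choose! p q hpq using hch
  -- minimize the depth q - p
  obtain ⟨r, hrS, hrmin⟩ := S.exists_min_image (fun j => (q j : ℤ) - p j) ⟨i, hiS⟩
  have hrsc : SC f Z r i := by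
    simpa [hS] using hrS
  have hrconst : ¬ ConstCoord Z r := by
    intro hc
    exact hi (const_of_sc hw hf hrsc hc)
  refine ⟨r, ⟨hrconst, ?_⟩, hrsc.symm⟩
  intro j hjr
  have hjS : j ∈ S := by
    simp only [hS, Finset.mem_filter]
    exact ⟨Finset.mem_univ _, hjr.trans hrsc⟩
  have h1 := hpq j hjS
  have h2 := hpq r hrS
  have hmin := hrmin j hjS
  -- f^[q r + p j] (x j) = f^[q j + p r] (x r)
  have key : ∀ x ∈ Z, f^[q r + p j] (x j) = f^[q j + p r] (x r) := by
    intro x hx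
    calc f^[q r + p j] (x j) = f^[q r] (f^[q j] (x i)) := by
          rw [Function.iterate_add_apply, h1 x hx]
        _ = f^[q j] (f^[q r] (x i)) := by
          rw [← Function.iterate_add_apply, Nat.add_comm, Function.iterate_add_apply]
        _ = f^[q j + p r] (x r) := by rw [← h2 x hx, ← Function.iterate_add_apply]
  have hle : q r + p j ≤ q j + p r := by omega
  refine ⟨(q j + p r) - (q r + p j), fun x hx => hf.iterate (q r + p j) ?_⟩
  rw [key x hx, ← Function.iterate_add_apply]
  congr 1; omega

open Classical in
/-- Every nonempty set has a root set (trivially for the empty set too,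
but we only need the nonempty case). -/
lemma exists_rootSet (hf : Function.Injective f) {Z : Set (Fin n → M)} (hw : Z.Nonempty) :
    ∃ R : Finset (Fin n), RootSet f Z R := by
  classical
  -- canonical base point of each class
  have hbase : ∀ i : Fin n, ¬ ConstCoord Z i →
      (Finset.univ.filter (fun j => SC f Z j i)).Nonempty := by
    intro i _
    exact ⟨i, by simp [SC.refl]⟩
  set base : Fin n → Fin n := fun i =>
    if h : ¬ ConstCoord Z i then
      (Finset.univ.filter (fun j => SC f Z j i)).min' (hbase i h)
    else i with hbasedef
  have hbase_sc : ∀ i, ¬ ConstCoord Z i → SC f Z (base i) i := by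
    intro i hi
    have := (Finset.univ.filter (fun j => SC f Z j i)).min'_mem (hbase i hi)
    simp only [hbasedef, dif_pos hi]
    simpa using this
  have hbase_eq : ∀ i i', ¬ ConstCoord Z i → ¬ ConstCoord Z i' → SC f Z i i' →
      base i = base i' := by
    intro i i' hi hi' hsc
    have hfilter : (Finset.univ.filter (fun j => SC f Z j i))
        = (Finset.univ.filter (fun j => SC f Z j i')) := by
      ext j
      simp only [Finset.mem_filter, Finset.mem_univ, true_and]
      exact ⟨fun h => h.trans hsc, fun h => h.trans hsc.symm⟩
    simp only [hbasedef, dif_pos hi, dif_pos hi']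
    congr 1
  have hbc : ∀ i, ¬ ConstCoord Z i → ¬ ConstCoord Z (base i) := by
    intro i hi hc
    obtain ⟨w, hwZ⟩ := hw
    exact hi (const_of_sc hwZ hf (hbase_sc i hi) hc)
  have hroot : ∀ j : Fin n, ¬ ConstCoord Z j → ∃ r, IsRoot f Z r ∧ SC f Z j r :=
    fun j hj => exists_root hf j hj hw
  choose! ρ0 hρ0 using hroot
  set ρ : Fin n → Fin n := fun i => ρ0 (base i) with hρdef
  have hρ : ∀ i, ¬ ConstCoord Z i → IsRoot f Z (ρ i) ∧ SC f Z (base i) (ρ i) :=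
    fun i hi => hρ0 (base i) (hbc i hi)
  refine ⟨(Finset.univ.filter (fun i => ¬ ConstCoord Z i)).image ρ, ?_, ?_, ?_⟩
  · intro r hr
    simp only [Finset.mem_image, Finset.mem_filter] at hr
    obtain ⟨i, ⟨-, hi⟩, rfl⟩ := hr
    exact (hρ i hi).1
  · intro r hr s hs hsc
    simp only [Finset.mem_image, Finset.mem_filter] at hr hs
    obtain ⟨i, ⟨-, hi⟩, rfl⟩ := hr
    obtain ⟨i', ⟨-, hi'⟩, rfl⟩ := hs
    -- SC i i' hence base i = base i'
    have h1 : SC f Z i (ρ i) := (hbase_sc i hi).symm.trans (hρ i hi).2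
    have h2 : SC f Z i' (ρ i') := (hbase_sc i' hi').symm.trans (hρ i' hi').2
    have : SC f Z i i' := (h1.trans hsc).trans h2.symm
    simp only [hρdef]
    rw [hbase_eq i i' hi hi' this]
  · intro i hi
    refine ⟨ρ i, ?_, (hbase_sc i hi).symm.trans (hρ i hi).2⟩
    simp only [Finset.mem_image, Finset.mem_filter]
    exact ⟨i, ⟨Finset.mem_univ _, hi⟩, rfl⟩

end TNAux

namespace TNAux

variable {M : Type} {f : M → M} {n : ℕ}

/-- The structure of a nonempty simple set: constant coordinates are pinned to the
witness values, and every non-constant coordinate is a fixed iterate of its root;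
conversely these conditions characterize membership. -/
lemma structure_data (hf : Function.Injective f) (hnc : NoCycles f)
    {Z : Set (Fin n → M)} {R : Finset (Fin n)} {w : Fin n → M}
    (hZ : IsSimple f Z) (hw : w ∈ Z) (hR : RootSet f Z R) :
    ∃ (rt : Fin n → Fin n) (k : Fin n → ℕ),
      (∀ i, ¬ ConstCoord Z i → rt i ∈ R ∧ (∀ x ∈ Z, x i = f^[k i] (x (rt i)))) ∧
      (∀ r ∈ R, rt r = r ∧ k r = 0) ∧
      (∀ x, x ∈ Z ↔ ((∀ i, ConstCoord Z i → x i = w i) ∧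
        (∀ i, ¬ ConstCoord Z i → x i = f^[k i] (x (rt i))))) := by
  classical
  have hconst_val : ∀ i, ConstCoord Z i → ∀ x ∈ Z, x i = w i := by
    rintro i ⟨a, ha⟩ x hx
    rw [ha x hx, ha w hw]
  -- choose roots
  have hex : ∀ i : Fin n, ¬ ConstCoord Z i → ∃ r, r ∈ R ∧ SC f Z i r := by
    intro i hi
    obtain ⟨r, hr, hsc⟩ := hR.2.2 i hi
    exact ⟨r, hr, hsc⟩
  choose! rt hrtR hrtSC using hex
  -- uniqueness of the root
  have hrt_unique : ∀ i, ¬ ConstCoord Z i → ∀ s ∈ R, SC f Z i s → rt i = s := by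
    intro i hi s hs hsc
    exact hR.2.1 _ (hrtR i hi) s hs ((hrtSC i hi).symm.trans hsc)
  -- choose exponents
  have hexk : ∀ i : Fin n, ¬ ConstCoord Z i → ∃ k, ∀ x ∈ Z, x i = f^[k] (x (rt i)) := by
    intro i hi
    exact ((hR.1 _ (hrtR i hi)).2) i (hrtSC i hi)
  choose! k hk using hexk
  have hRnc : ∀ r ∈ R, ¬ ConstCoord Z r := fun r hr => (hR.1 r hr).1
  have hrt_self : ∀ r ∈ R, rt r = r := by
    intro r hr
    exact hrt_unique r (hRnc r hr) r hr (SC.refl Z r)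
  have hk_self : ∀ r ∈ R, k r = 0 := by
    intro r hr
    have h1 := hk r (hRnc r hr) w hw
    rw [hrt_self r hr] at h1
    have : f^[0] (w r) = f^[k r] (w r) := h1
    exact (cancel hf hnc this).symm
  refine ⟨rt, k, fun i hi => ⟨hrtR i hi, hk i hi⟩, fun r hr => ⟨hrt_self r hr, hk_self r hr⟩, ?_⟩
  intro x
  constructor
  · intro hx
    exact ⟨fun i hi => hconst_val i hi x hx, fun i hi => hk i hi x hx⟩
  · rintro ⟨hx1, hx2⟩
    obtain ⟨E, Cs, hEq⟩ := hZ
    rw [hEq]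
    have hwE : (∀ p ∈ E, w p.1 = f^[p.2.2] (w p.2.1)) ∧ (∀ q ∈ Cs, w q.1 = q.2) := by
      rw [hEq] at hw; exact hw
    constructor
    · intro p hp
      obtain ⟨i, j, k0⟩ := p
      have hrel : ∀ y ∈ Z, y i = f^[k0] (y j) := by
        intro y hy
        rw [hEq] at hy
        exact hy.1 _ hp
      by_cases hcj : ConstCoord Z j
      · have hci : ConstCoord Z i := by
          refine ⟨f^[k0] (w j), fun y hy => ?_⟩
          rw [hrel y hy, hconst_val j hcj y hy]
        show x i = f^[k0] (x j)
        rw [hx1 i hci, hx1 j hcj, hrel w hw]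
      · have hci : ¬ ConstCoord Z i := by
          rintro ⟨a, ha⟩
          apply hcj
          refine ⟨w j, fun y hy => hf.iterate k0 ?_⟩
          rw [← hrel y hy, ← hrel w hw, ha y hy, ha w hw]
        have hscij : SC f Z i j := SC.of_rel hrel
        have hrteq : rt i = rt j :=
          hrt_unique i hci (rt j) (hrtR j hcj) (hscij.trans (hrtSC j hcj))
        have hkey : k i = k0 + k j := by
          have h1 := hk i hci w hw
          have h2 := hk j hcj w hw
          have h3 := hrel w hw
          rw [h2] at h3
          rw [← Function.iterate_add_apply, ← hrteq] at h3
          rw [h1] at h3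
          exact cancel hf hnc h3
        show x i = f^[k0] (x j)
        rw [hx2 i hci, hx2 j hcj, hrteq, hkey, Function.iterate_add_apply]
    · intro q hq
      have hcq : ConstCoord Z q.1 := by
        refine ⟨q.2, fun y hy => ?_⟩
        rw [hEq] at hy
        exact hy.2 q hq
      show x q.1 = q.2
      rw [hx1 q.1 hcq, hwE.2 q hq]

end TNAux

namespace TNAux

variable {M : Type} {f : M → M} {n : ℕ}

/-- Evaluation at the roots is a bijection from a nonempty simple set onto the
full function space. -/
lemma bijOn_roots (hf : Function.Injective f) (hnc : NoCycles f)
    {Z : Set (Fin n → M)} {R : Finset (Fin n)} {w : Fin n → M}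
    (hZ : IsSimple f Z) (hw : w ∈ Z) (hR : RootSet f Z R) :
    Set.BijOn (fun x (a : Fin R.card) => x ((R.equivFin.symm a) : Fin n)) Z Set.univ := by
  classical
  obtain ⟨rt, k, hdata, hself, hmem⟩ := structure_data hf hnc hZ hw hR
  have hRnc : ∀ r ∈ R, ¬ ConstCoord Z r := fun r hr => (hR.1 r hr).1
  refine ⟨fun x _ => trivial, ?_, ?_⟩
  · -- injectivity
    intro x hx y hy hxy
    have hagree : ∀ r ∈ R, x r = y r := by
      intro r hr
      have := congrFun hxy (R.equivFin ⟨r, hr⟩)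
      simpa using this
    funext i
    by_cases hi : ConstCoord Z i
    · rw [((hmem x).1 hx).1 i hi, ((hmem y).1 hy).1 i hi]
    · rw [((hmem x).1 hx).2 i hi, ((hmem y).1 hy).2 i hi,
        hagree (rt i) (hdata i hi).1]
  · -- surjectivity
    intro v _
    set u : Fin n → M := fun i =>
      if h : ConstCoord Z i then w i
      else f^[k i] (v (R.equivFin ⟨rt i, (hdata i h).1⟩)) with hudef
    have hu_root : ∀ r (hr : r ∈ R), u r = v (R.equivFin ⟨r, hr⟩) := by
      intro r hr
      have hnc' : ¬ ConstCoord Z r := hRnc r hr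
      simp only [hudef, dif_neg hnc']
      have h1 : rt r = r := (hself r hr).1
      have h2 : k r = 0 := (hself r hr).2
      have hsub : (⟨rt r, (hdata r hnc').1⟩ : { x // x ∈ R }) = ⟨r, hr⟩ := Subtype.ext h1
      rw [hsub, h2]
      simp
    have huZ : u ∈ Z := by
      rw [hmem]
      constructor
      · intro i hi
        simp [hudef, dif_pos hi]
      · intro i hi
        have hrtmem := (hdata i hi).1
        rw [hu_root (rt i) hrtmem]
        simp [hudef, dif_neg hi]
    refine ⟨u, huZ, ?_⟩
    funext a
    have hmem' : ((R.equivFin.symm a : { x // x ∈ R }) : Fin n) ∈ R :=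
      (R.equivFin.symm a).2
    show u ((R.equivFin.symm a : { x // x ∈ R }) : Fin n) = v a
    rw [hu_root _ hmem']
    congr 1
    rw [show (⟨((R.equivFin.symm a : { x // x ∈ R }) : Fin n), hmem'⟩ :
      { x // x ∈ R }) = R.equivFin.symm a from Subtype.ext rfl]
    exact R.equivFin.apply_symm_apply a

end TNAux

namespace TNAux

variable {M : Type} {f : M → M} {n : ℕ}

lemma const_mono {Z Z' : Set (Fin n → M)} (hss : Z ⊆ Z') {i : Fin n}
    (h : ConstCoord Z' i) : ConstCoord Z i := by
  obtain ⟨a, ha⟩ := h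
  exact ⟨a, fun x hx => ha x (hss hx)⟩

lemma sc_mono {Z Z' : Set (Fin n → M)} (hss : Z ⊆ Z') {i j : Fin n}
    (h : SC f Z' i j) : SC f Z i j := by
  obtain ⟨p, q, h⟩ := h
  exact ⟨p, q, fun x hx => h x (hss hx)⟩

/-- Strict monotonicity of the number of classes along strict inclusions of
nonempty simple sets. -/
lemma rootSet_card_lt (hf : Function.Injective f) (hnc : NoCycles f)
    {Z Z' : Set (Fin n → M)} {R R' : Finset (Fin n)}
    (hZ : IsSimple f Z) (hZ' : IsSimple f Z') (hne : Z.Nonempty) (hss : Z ⊂ Z')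
    (hR : RootSet f Z R) (hR' : RootSet f Z' R') : R.card < R'.card := by
  classical
  obtain ⟨w, hw⟩ := hne
  have hsub : Z ⊆ Z' := hss.1
  have hw' : w ∈ Z' := hsub hw
  obtain ⟨rt, k, hdata, hself, hmem⟩ := structure_data hf hnc hZ hw hR
  obtain ⟨rt', k', hdata', hself', hmem'⟩ := structure_data hf hnc hZ' hw' hR'
  have hRnc : ∀ r ∈ R, ¬ ConstCoord Z r := fun r hr => (hR.1 r hr).1
  have hRnc' : ∀ r ∈ R, ¬ ConstCoord Z' r := fun r hr hc =>
    hRnc r hr (const_mono hsub hc)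
  -- roots of Z are non-constant in Z' and get a Z'-root
  have hψmem : ∀ r ∈ R, rt' r ∈ R' := fun r hr => (hdata' r (hRnc' r hr)).1
  have hSCrt' : ∀ i, ¬ ConstCoord Z' i → SC f Z' i (rt' i) := fun i hi =>
    SC.of_rel (hdata' i hi).2
  have hSCrt : ∀ i, ¬ ConstCoord Z i → SC f Z i (rt i) := fun i hi =>
    SC.of_rel (hdata i hi).2
  have hinj : (↑R : Set (Fin n)).InjOn rt' := by
    intro r1 h1 r2 h2 heq
    have s1 : SC f Z' r1 (rt' r1) := hSCrt' r1 (hRnc' r1 h1)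
    have s2 : SC f Z' r2 (rt' r2) := hSCrt' r2 (hRnc' r2 h2)
    rw [heq] at s1
    exact hR.2.1 r1 h1 r2 h2 (sc_mono hsub (s1.trans s2.symm))
  have hle : R.card ≤ R'.card := Finset.card_le_card_of_injOn rt' hψmem hinj
  rcases lt_or_eq_of_le hle with h | hcard
  · exact h
  -- equality: derive Z' ⊆ Z, contradiction
  exfalso
  have hsurj := Finset.surj_on_of_inj_on_of_card_le (s := R) (t := R')
    (fun a _ => rt' a) (fun a ha => hψmem a ha) (fun a b ha hb => hinj ha hb) hcard.ge
  apply hss.2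
  intro y hy
  -- constants agree
  have hconst_eq : ∀ i, ConstCoord Z i → ConstCoord Z' i := by
    intro i hc
    by_contra hnc''
    obtain ⟨r', hr', hscr'⟩ := hR'.2.2 i hnc''
    obtain ⟨r, hrR, hreq⟩ := hsurj r' hr'
    have hreq' : r' = rt' r := hreq
    have : SC f Z' i r := hscr'.trans (hreq' ▸ hSCrt' r (hRnc' r hrR)).symm
    exact hRnc r hrR (const_of_sc hw hf (sc_mono hsub this) hc)
  rw [hmem y]
  constructor
  · intro i hi
    obtain ⟨a, ha⟩ := hconst_eq i hi
    rw [ha y hy, ha w hw']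
  · intro i hi
    have hi' : ¬ ConstCoord Z' i := fun hc => hi (const_mono hsub hc)
    set r := rt i with hrdef
    have hrR : r ∈ R := (hdata i hi).1
    -- rt' i = rt' r
    have hrteq : rt' i = rt' r := by
      obtain ⟨s, hsR, hseq⟩ := hsurj (rt' i) (hdata' i hi').1
      have hseq' : rt' i = rt' s := hseq
      have hsc_is : SC f Z' i s :=
        (hSCrt' i hi').trans (hseq' ▸ hSCrt' s (hRnc' s hsR)).symm
      have hsc_rs : SC f Z r s :=
        (hSCrt i hi).symm.trans (sc_mono hsub hsc_is)
      have : r = s := hR.2.1 r hrR s hsR hsc_rs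
      rw [hseq', ← this]
    -- exponent relation at the witness
    have hkey : k' i = k i + k' r := by
      have h1 : w i = f^[k i] (w r) := (hdata i hi).2 w hw
      have h2 : w i = f^[k' i] (w (rt' i)) := (hdata' i hi').2 w hw'
      have h3 : w r = f^[k' r] (w (rt' r)) := (hdata' r (hRnc' r hrR)).2 w hw'
      rw [hrteq] at h2
      rw [h3, ← Function.iterate_add_apply] at h1
      rw [h1] at h2
      exact (cancel hf hnc h2).symm
    have hy1 : y i = f^[k' i] (y (rt' r)) := by
      rw [← hrteq]; exact (hdata' i hi').2 y hy
    have hy2 : y r = f^[k' r] (y (rt' r)) := (hdata' r (hRnc' r hrR)).2 y hy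
    rw [hy1, hy2, hkey, Function.iterate_add_apply]

end TNAux

namespace TNAux

variable {M : Type} {f : M → M} {n : ℕ}

/-- Monotonicity (non-strict) of root-set cardinality; needs no witnesses. -/
lemma rootSet_card_le {Z Z' : Set (Fin n → M)} {R R' : Finset (Fin n)}
    (hsub : Z ⊆ Z') (hR : RootSet f Z R) (hR' : RootSet f Z' R') :
    R.card ≤ R'.card := by
  classical
  choose! rt' hrt' using hR'.2.2
  have hRnc : ∀ r ∈ R, ¬ ConstCoord Z r := fun r hr => (hR.1 r hr).1
  have hRnc' : ∀ r ∈ R, ¬ ConstCoord Z' r := fun r hr hc =>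
    hRnc r hr (const_mono hsub hc)
  refine Finset.card_le_card_of_injOn rt' (fun r hr => (hrt' r (hRnc' r hr)).1) ?_
  intro r1 h1 r2 h2 heq
  have s1 : SC f Z' r1 (rt' r1) := (hrt' r1 (hRnc' r1 h1)).2
  have s2 : SC f Z' r2 (rt' r2) := (hrt' r2 (hRnc' r2 h2)).2
  rw [heq] at s1
  exact hR.2.1 r1 h1 r2 h2 (sc_mono hsub (s1.trans s2.symm))

lemma rootSet_card_eq {Z : Set (Fin n → M)} {R R' : Finset (Fin n)}
    (hR : RootSet f Z R) (hR' : RootSet f Z R') : R.card = R'.card :=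
  le_antisymm (rootSet_card_le subset_rfl hR hR') (rootSet_card_le subset_rfl hR' hR)

/-- Along a strict chain of nonempty simple sets, the number of classes of the
last set is at least the length of the chain. -/
lemma chain_card (hf : Function.Injective f) (hnc : NoCycles f) {d : ℕ}
    {Z : Fin (d+1) → Set (Fin n → M)} (hmono : StrictMono Z)
    (hsimp : ∀ i, IsSimple f (Z i)) (hne : ∀ i, (Z i).Nonempty)
    {R : Finset (Fin n)} (hR : RootSet f (Z (Fin.last d)) R) : d ≤ R.card := by
  choose Rv hRv using fun i => exists_rootSet hf (Z := Z i) (hne i)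
  have hstep : ∀ i j : Fin (d+1), i < j → (Rv i).card < (Rv j).card := by
    intro i j hij
    exact rootSet_card_lt hf hnc (hsimp i) (hsimp j) (hne i)
      (Set.lt_iff_ssubset.mp (hmono hij)) (hRv i) (hRv j)
  have key : ∀ m : ℕ, ∀ hm : m < d + 1, m ≤ (Rv ⟨m, hm⟩).card := by
    intro m
    induction m with
    | zero => intro _; exact Nat.zero_le _
    | succ p ih =>
      intro hm
      have hp : p < d + 1 := by omega
      have h1 := ih hp
      have h2 := hstep ⟨p, hp⟩ ⟨p+1, hm⟩ (by simp [Fin.lt_def])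
      omega
  have := key d (by omega)
  have heq : (Rv ⟨d, by omega⟩).card = R.card :=
    rootSet_card_eq (by convert hRv ⟨d, by omega⟩ using 2 <;> rfl) hR
  omega

end TNAux

namespace TNAux

variable {M : Type} {f : M → M} {n : ℕ}

/-- If a nonempty simple set has at least `m+1` classes, there is a strict chain of
`m+2` nonempty simple sets ending at it. -/
lemma chain_of_rootSet (hf : Function.Injective f) (hnc : NoCycles f)
    {A : Set (Fin n → M)} {R : Finset (Fin n)} {w : Fin n → M}
    (hA : IsSimple f A) (hw : w ∈ A) (hR : RootSet f A R) (m : ℕ)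
    (hm : m + 1 ≤ R.card) :
    ∃ Z : Fin (m+2) → Set (Fin n → M), StrictMono Z ∧
      (∀ i, IsSimple f (Z i) ∧ (Z i).Nonempty) ∧ Z (Fin.last (m+1)) = A := by
  classical
  set ε := R.equivFin with hε
  set Z : Fin (m+2) → Set (Fin n → M) := fun t =>
    {x | x ∈ A ∧ ∀ a : Fin R.card, a.val < (m + 1) - t.val →
      x ((ε.symm a : { x // x ∈ R }) : Fin n) = w ((ε.symm a : { x // x ∈ R }) : Fin n)}
    with hZ
  have hwZ : ∀ t, w ∈ Z t := fun t => ⟨hw, fun a _ => rfl⟩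
  have hsub : ∀ s t : Fin (m+2), s ≤ t → Z s ⊆ Z t := by
    intro s t hst x hx
    refine ⟨hx.1, fun a ha => hx.2 a ?_⟩
    have : s.val ≤ t.val := hst
    omega
  have hssub : ∀ s t : Fin (m+2), s < t → Z s ≠ Z t := by
    intro s t hst
    have hb : (m + 1) - t.val < R.card := by
      have ht : t.val ≤ m + 1 := by omega
      have hs : s.val < t.val := hst
      omega
    set a0 : Fin R.card := ⟨(m + 1) - t.val, hb⟩ with ha0
    set v : Fin R.card → M := fun a =>
      if a = a0 then f (w ((ε.symm a0 : { x // x ∈ R }) : Fin n))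
      else w ((ε.symm a : { x // x ∈ R }) : Fin n) with hv
    obtain ⟨x, hxA, hxv⟩ := (bijOn_roots hf hnc hA hw hR).2.2 (Set.mem_univ v)
    intro heq
    have hxt : x ∈ Z t := by
      refine ⟨hxA, fun a ha => ?_⟩
      have hane : a ≠ a0 := by
        intro h; rw [h] at ha; simp [ha0] at ha
      have := congrFun hxv a
      simp only [hv, if_neg hane] at this
      exact this
    have hxs : x ∈ Z s := heq ▸ hxt
    have ha0lt : a0.val < (m + 1) - s.val := by
      have hs : s.val < t.val := hst
      have ht : t.val ≤ m + 1 := by omega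
      simp only [ha0]
      omega
    have := hxs.2 a0 ha0lt
    have h2 := congrFun hxv a0
    simp only [hv, if_pos rfl] at h2
    rw [this] at h2
    exact hnc 1 (by omega) _ (by simpa using h2.symm)
  refine ⟨Z, ?_, ?_, ?_⟩
  · intro s t hst
    exact lt_of_le_of_ne (hsub s t hst.le) (hssub s t hst)
  · intro t
    refine ⟨?_, ⟨w, hwZ t⟩⟩
    obtain ⟨E, Cs, hEq⟩ := hA
    refine ⟨E, Cs ++ ((List.finRange R.card).filter
      (fun a => decide (a.val < (m + 1) - t.val))).map
      (fun a => (((ε.symm a : { x // x ∈ R }) : Fin n),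
        w ((ε.symm a : { x // x ∈ R }) : Fin n))), ?_⟩
    ext x
    simp only [hZ, Set.mem_setOf_eq, hEq, List.mem_append, List.mem_map,
      List.mem_filter, List.mem_finRange, true_and, decide_eq_true_eq]
    constructor
    · rintro ⟨⟨h1, h2⟩, h3⟩
      refine ⟨h1, fun q hq => ?_⟩
      rcases hq with hq | ⟨a, ha, rfl⟩
      · exact h2 q hq
      · exact h3 a ha
    · rintro ⟨h1, h2⟩
      refine ⟨⟨h1, fun q hq => h2 q (Or.inl hq)⟩, fun a ha => ?_⟩
      exact h2 _ (Or.inr ⟨a, ha, rfl⟩)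
  · ext x
    simp only [hZ, Set.mem_setOf_eq, Fin.val_last]
    constructor
    · exact fun h => h.1
    · intro h
      refine ⟨h, fun a ha => ?_⟩
      omega

end TNAux


/-- Let `A ⊆ M^n` be a nonempty simple set of topological dimension `d`: there is a
chain `Z 0 ⊊ ... ⊊ Z d = A` of nonempty simple sets, but no such chain of length
`d+1`. Then `d` is the number of equivalence classes of `A`, and `A` is in bijection
with `M^d`. -/
theorem stmt_13 {M : Type} (N : ℕ) (f : M → M) (c : Fin N → M)
    (h : ModelTN N M f c) {n : ℕ} (A : Set (Fin n → M))
    (hA : IsSimple f A) (hne : A.Nonempty) (d : ℕ)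
    (hchain : ∃ Z : Fin (d+1) → Set (Fin n → M),
      StrictMono Z ∧ (∀ i, IsSimple f (Z i) ∧ (Z i).Nonempty) ∧ Z (Fin.last d) = A)
    (hmax : ¬ ∃ Z : Fin (d+2) → Set (Fin n → M),
      StrictMono Z ∧ (∀ i, IsSimple f (Z i) ∧ (Z i).Nonempty) ∧ Z (Fin.last (d+1)) = A) :
    (∃ rep : Fin d → Fin n, ClassRep f A rep) ∧
    Nonempty (↥A ≃ (Fin d → M)) := by
  classical
  obtain ⟨w, hw⟩ := hne
  have hf := h.finj
  have hnc := h.nocycles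
  obtain ⟨R, hR⟩ := TNAux.exists_rootSet hf (Z := A) ⟨w, hw⟩
  obtain ⟨Zc, hZmono, hZprop, hZlast⟩ := hchain
  have hlow : d ≤ R.card := TNAux.chain_card hf hnc hZmono (fun i => (hZprop i).1)
    (fun i => (hZprop i).2) (hZlast ▸ hR)
  have hup : R.card ≤ d := by
    by_contra hlt
    push_neg at hlt
    obtain ⟨Z, h1, h2, h3⟩ := TNAux.chain_of_rootSet hf hnc hA hw hR d (by omega)
    exact hmax ⟨Z, h1, h2, h3⟩
  have hcard : R.card = d := le_antisymm hup hlow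
  set ε := R.equivFin with hε
  constructor
  · set rep : Fin d → Fin n := fun a =>
      ((ε.symm (finCongr hcard.symm a) : { x // x ∈ R }) : Fin n) with hrep
    have hrepR : ∀ a, rep a ∈ R := fun a => (ε.symm (finCongr hcard.symm a)).2
    refine ⟨rep, fun a => (hR.1 _ (hrepR a)).1, ?_, ?_⟩
    · intro a b hab hrel
      have hsc := (TNAux.relCoord_iff_sc hf).1 hrel
      have heq : rep a = rep b := hR.2.1 _ (hrepR a) _ (hrepR b) hsc
      apply hab
      have h1 : ε.symm (finCongr hcard.symm a) = ε.symm (finCongr hcard.symm b) :=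
        Subtype.ext heq
      have h2 := ε.symm.injective h1
      exact (finCongr hcard.symm).injective h2
    · intro i hi
      obtain ⟨r, hrR, hsc⟩ := hR.2.2 i hi
      refine ⟨finCongr hcard (ε ⟨r, hrR⟩), ?_⟩
      have hre : rep (finCongr hcard (ε ⟨r, hrR⟩)) = r := by
        simp only [hrep, finCongr_symm_apply, Fin.cast_cast, Fin.cast_eq_self]
        rw [show (finCongr hcard.symm) ((finCongr hcard) (ε ⟨r, hrR⟩))
          = ε ⟨r, hrR⟩ from (finCongr hcard).symm_apply_apply _]
        rw [ε.symm_apply_apply]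
      rw [hre]
      obtain ⟨k, hk⟩ := (hR.1 r hrR).2 i hsc
      exact ⟨k, Or.inl hk⟩
  · have hbij := TNAux.bijOn_roots hf hnc hA hw hR
    have hinj : Function.Injective
        (fun x : ↥A => fun a : Fin R.card =>
          x.1 ((ε.symm a : { x // x ∈ R }) : Fin n)) := by
      intro x y hxy
      exact Subtype.ext (hbij.2.1 x.2 y.2 hxy)
    have hsurj : Function.Surjective
        (fun x : ↥A => fun a : Fin R.card =>
          x.1 ((ε.symm a : { x // x ∈ R }) : Fin n)) := by
      intro v
      obtain ⟨x, hxA, hx⟩ := hbij.2.2 (Set.mem_univ v)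
      exact ⟨⟨x, hxA⟩, hx⟩
    exact ⟨(Equiv.ofBijective _ ⟨hinj, hsurj⟩).trans
      (Equiv.arrowCongr (finCongr hcard) (Equiv.refl M))⟩
end

section
/- Every definable subset A of Mⁿ (M a model of T_N) can be written as a finite disjoint union A = ⊔_{i∈I} (B_i \ ⋃_{j∈I_i} B_{i,j}) where each B_i is a simple set and each B_{i,j} is a simple set properly contained in B_i. -/
open Function Set

theorem ModelTN.nonempty (h : ModelTN N M f c) : Nonempty M := ⟨c ⟨0, h.npos⟩⟩

theorem ModelTN.iterInj (h : ModelTN N M f c) (k : ℕ) : Function.Injective (f^[k]) :=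
  h.finj.iterate k

theorem ModelTN.infinite (h : ModelTN N M f c) : Infinite M := by
  have x0 : M := c ⟨0, h.npos⟩
  refine Infinite.of_injective (fun m : ℕ => f^[m] x0) ?_
  intro a b hab
  by_contra hne
  wlog hlt : a < b generalizing a b
  · exact this hab.symm (Ne.symm hne) (by omega)
  have : f^[a] (f^[b - a] x0) = f^[a] x0 := by
    rw [← Function.iterate_add_apply]
    rw [show a + (b - a) = b by omega]
    exact hab.symm
  have h2 := h.iterInj a this
  exact h.nocycles (b - a) (by omega) x0 h2

theorem ModelTN.mem_range_iter (h : ModelTN N M f c) (k : ℕ) (a : M) :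
    a ∈ Set.range (f^[k]) ↔ ∀ m < k, ∀ i, f^[m] (c i) ≠ a := by
  induction k generalizing a with
  | zero => simp
  | succ k ih =>
    constructor
    · rintro ⟨b, rfl⟩ m hm i hmi
      rcases m with _ | m
      · simp only [Function.iterate_zero_apply] at hmi
        have hc : c i ∈ Set.range f := ⟨f^[k] b, by
          rw [← Function.iterate_succ_apply' f k b, ← hmi]⟩
        rw [h.frange] at hc
        exact hc.2 ⟨i, rfl⟩
      · have hb : f^[k] b ∈ Set.range (f^[k]) := ⟨b, rfl⟩
        rw [ih] at hb
        refine hb m (by omega) i (h.finj ?_)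
        rw [← Function.iterate_succ_apply' f m (c i), ← Function.iterate_succ_apply' f k b]
        exact hmi
    · intro hall
      have ha : a ∈ Set.range f := by
        rw [h.frange]
        refine ⟨trivial, ?_⟩
        rintro ⟨i, rfl⟩
        exact hall 0 (by omega) i rfl
      obtain ⟨b, rfl⟩ := ha
      have hb : b ∈ Set.range (f^[k]) := by
        rw [ih]
        intro m hm i hmi
        exact hall (m + 1) (by omega) i (by rw [Function.iterate_succ_apply' f m (c i), hmi])
      obtain ⟨u, rfl⟩ := hb
      exact ⟨u, by rw [Function.iterate_succ_apply' f k u]⟩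

noncomputable def sec (h : ModelTN N M f c) : M → M :=
  haveI := h.nonempty
  Function.invFun f

theorem sec_leftInv (h : ModelTN N M f c) : Function.LeftInverse (sec h) f := by
  haveI := h.nonempty
  exact Function.leftInverse_invFun h.finj

theorem sec_iter_leftInv (h : ModelTN N M f c) (k : ℕ) (y : M) :
    (sec h)^[k] (f^[k] y) = y :=
  (sec_leftInv h).iterate k y

theorem sec_iter_rightInv (h : ModelTN N M f c) (k : ℕ) {a : M}
    (ha : a ∈ Set.range (f^[k])) : f^[k] ((sec h)^[k] a) = a := by
  obtain ⟨b, rfl⟩ := ha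
  rw [sec_iter_leftInv h k b]


namespace BCdev

variable {M : Type} {ι κ : Type}

/-- A literal: either `x i = f^[k] (x j)` or `x i = a`. -/
abbrev Lit (M ι : Type) := (ι × ι × ℕ) ⊕ (ι × M)

def litSet (f : M → M) : Lit M ι → Set (ι → M)
  | .inl (i, j, k) => {x | x i = f^[k] (x j)}
  | .inr (i, a) => {x | x i = a}

def cell (f : M → M) (P Q : List (Lit M ι)) : Set (ι → M) :=
  {x | (∀ l ∈ P, x ∈ litSet f l) ∧ (∀ l ∈ Q, x ∉ litSet f l)}

/-- Boolean combinations of literal sets, in DNF form. -/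
def BC (f : M → M) (A : Set (ι → M)) : Prop :=
  ∃ L : List (List (Lit M ι) × List (Lit M ι)),
    A = {x | ∃ pq ∈ L, x ∈ cell f pq.1 pq.2}

variable {f : M → M}

theorem BC_empty : BC f (∅ : Set (ι → M)) := ⟨[], by ext x; simp⟩

theorem BC_cell (P Q : List (Lit M ι)) : BC f (cell f P Q) :=
  ⟨[(P, Q)], by ext x; simp⟩

theorem BC_univ : BC f (univ : Set (ι → M)) := by
  have : cell f ([] : List (Lit M ι)) [] = univ := by ext x; simp [cell]
  rw [← this]; exact BC_cell _ _

theorem BC_lit (l : Lit M ι) : BC f (litSet f l) := by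
  have : cell f [l] [] = litSet f l := by ext x; simp [cell]
  rw [← this]; exact BC_cell _ _

theorem BC_union {A B : Set (ι → M)} (hA : BC f A) (hB : BC f B) : BC f (A ∪ B) := by
  obtain ⟨L₁, rfl⟩ := hA; obtain ⟨L₂, rfl⟩ := hB
  refine ⟨L₁ ++ L₂, ?_⟩
  ext x; simp only [mem_union, mem_setOf_eq, List.mem_append]
  constructor
  · rintro (⟨pq, h, hx⟩ | ⟨pq, h, hx⟩) <;> exact ⟨pq, by tauto, hx⟩
  · rintro ⟨pq, h | h, hx⟩
    · exact Or.inl ⟨pq, h, hx⟩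
    · exact Or.inr ⟨pq, h, hx⟩

theorem cell_append (P₁ Q₁ P₂ Q₂ : List (Lit M ι)) :
    cell f (P₁ ++ P₂) (Q₁ ++ Q₂) = cell f P₁ Q₁ ∩ cell f P₂ Q₂ := by
  ext x; simp only [cell, mem_inter_iff, mem_setOf_eq, List.mem_append]
  constructor
  · rintro ⟨h1, h2⟩
    exact ⟨⟨fun l hl => h1 l (Or.inl hl), fun l hl => h2 l (Or.inl hl)⟩,
      ⟨fun l hl => h1 l (Or.inr hl), fun l hl => h2 l (Or.inr hl)⟩⟩
  · rintro ⟨⟨a1, a2⟩, ⟨b1, b2⟩⟩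
    exact ⟨fun l hl => hl.elim (a1 l) (b1 l), fun l hl => hl.elim (a2 l) (b2 l)⟩

theorem BC_inter {A B : Set (ι → M)} (hA : BC f A) (hB : BC f B) : BC f (A ∩ B) := by
  obtain ⟨L₁, rfl⟩ := hA; obtain ⟨L₂, rfl⟩ := hB
  refine ⟨L₁.flatMap fun pq₁ => L₂.map fun pq₂ => (pq₁.1 ++ pq₂.1, pq₁.2 ++ pq₂.2), ?_⟩
  ext x
  simp only [mem_inter_iff, mem_setOf_eq, List.mem_flatMap, List.mem_map]
  constructor
  · rintro ⟨⟨pq₁, h₁, hx₁⟩, ⟨pq₂, h₂, hx₂⟩⟩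
    refine ⟨(pq₁.1 ++ pq₂.1, pq₁.2 ++ pq₂.2), ⟨pq₁, h₁, pq₂, h₂, rfl⟩, ?_⟩
    rw [cell_append]; exact ⟨hx₁, hx₂⟩
  · rintro ⟨pq, ⟨pq₁, h₁, pq₂, h₂, rfl⟩, hx⟩
    rw [cell_append] at hx
    exact ⟨⟨pq₁, h₁, hx.1⟩, ⟨pq₂, h₂, hx.2⟩⟩

theorem BC_compl {A : Set (ι → M)} (hA : BC f A) : BC f Aᶜ := by
  obtain ⟨L, rfl⟩ := hA
  induction L with
  | nil => simpa using (BC_univ : BC f (univ : Set (ι → M)))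
  | cons pq L ih =>
    have h1 : {x : ι → M | ∃ pq' ∈ pq :: L, x ∈ cell f pq'.1 pq'.2} =
        cell f pq.1 pq.2 ∪ {x | ∃ pq' ∈ L, x ∈ cell f pq'.1 pq'.2} := by
      ext x; simp only [mem_union, mem_setOf_eq, List.mem_cons]
      constructor
      · rintro ⟨pq', h | h, hx⟩
        · subst h; exact Or.inl hx
        · exact Or.inr ⟨pq', h, hx⟩
      · rintro (hx | ⟨pq', h, hx⟩)
        · exact ⟨pq, Or.inl rfl, hx⟩
        · exact ⟨pq', Or.inr h, hx⟩
    rw [h1, compl_union]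
    refine BC_inter ?_ ih
    -- complement of a single cell
    have h2 : (cell f pq.1 pq.2)ᶜ =
        {x | ∃ pq' ∈ (pq.1.map fun l => (([] : List (Lit M ι)), [l])) ++
            (pq.2.map fun l => ([l], ([] : List (Lit M ι)))), x ∈ cell f pq'.1 pq'.2} := by
      ext x
      simp only [mem_compl_iff, mem_setOf_eq, cell, List.mem_append, List.mem_map,
        not_and_or, not_forall]
      constructor
      · rintro (⟨l, hl, hx⟩ | ⟨l, hl, hx⟩)
        · refine ⟨([], [l]), Or.inl ⟨l, hl, rfl⟩, by simp, by simpa using hx⟩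
        · refine ⟨([l], []), Or.inr ⟨l, hl, rfl⟩, by simpa using not_not.mp hx, by simp⟩
      · rintro ⟨pq', ⟨l, hl, rfl⟩ | ⟨l, hl, rfl⟩, hx⟩
        · exact Or.inl ⟨l, hl, by simpa using hx.2 l (by simp)⟩
        · exact Or.inr ⟨l, hl, by simpa using hx.1 l (by simp)⟩
    rw [h2]; exact ⟨_, rfl⟩

theorem BC_diff {A B : Set (ι → M)} (hA : BC f A) (hB : BC f B) : BC f (A \ B) :=
  BC_inter hA (BC_compl hB)

/-- Reindexing. -/
def mapLit (σ : ι → κ) : Lit M ι → Lit M κ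
  | .inl (i, j, k) => .inl (σ i, σ j, k)
  | .inr (i, a) => .inr (σ i, a)

theorem litSet_mapLit (σ : ι → κ) (l : Lit M ι) (x : κ → M) :
    x ∈ litSet f (mapLit σ l) ↔ (x ∘ σ) ∈ litSet f l := by
  rcases l with ⟨i, j, k⟩ | ⟨i, a⟩ <;> rfl

theorem BC_comp (σ : ι → κ) {A : Set (ι → M)} (hA : BC f A) :
    BC f {x : κ → M | x ∘ σ ∈ A} := by
  obtain ⟨L, rfl⟩ := hA
  refine ⟨L.map fun pq => (pq.1.map (mapLit σ), pq.2.map (mapLit σ)), ?_⟩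
  ext x
  simp only [mem_setOf_eq, List.mem_map]
  constructor
  · rintro ⟨pq, h, hx⟩
    refine ⟨_, ⟨pq, h, rfl⟩, ?_, ?_⟩
    · intro l hl
      simp only [List.mem_map] at hl
      obtain ⟨l', hl', rfl⟩ := hl
      exact (litSet_mapLit σ l' x).mpr (hx.1 l' hl')
    · intro l hl
      simp only [List.mem_map] at hl
      obtain ⟨l', hl', rfl⟩ := hl
      exact fun h' => hx.2 l' hl' ((litSet_mapLit σ l' x).mp h')
  · rintro ⟨pq', ⟨pq, h, rfl⟩, hx⟩
    refine ⟨pq, h, ?_, ?_⟩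
    · intro l hl
      exact (litSet_mapLit σ l x).mp (hx.1 _ (List.mem_map.mpr ⟨l, hl, rfl⟩))
    · intro l hl h'
      exact hx.2 _ (List.mem_map.mpr ⟨l, hl, rfl⟩) ((litSet_mapLit σ l x).mpr h')

end BCdev

namespace BCdev2
open BCdev

variable {M : Type} {N : ℕ} {f : M → M} {c : Fin N → M} {ι : Type}

/-- `v` is a "term function": an iterate applied to a coordinate, or a constant. -/
def TermF (f : M → M) (v : (ι → M) → M) : Prop :=
  (∃ k i, ∀ x, v x = f^[k] (x i)) ∨ (∃ a : M, ∀ x, v x = a)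

theorem TermF.comp (k : ℕ) {v : (ι → M) → M} (hv : TermF f v) :
    TermF f (fun x => f^[k] (v x)) := by
  rcases hv with ⟨m, i, hv⟩ | ⟨a, hv⟩
  · exact Or.inl ⟨k + m, i, fun x => by show f^[k] (v x) = _; rw [hv, Function.iterate_add_apply]⟩
  · exact Or.inr ⟨f^[k] a, fun x => by show f^[k] (v x) = _; rw [hv]⟩

theorem atomBC1 (h : ModelTN N M f c) (a b : ℕ) (i j : ι) :
    BC f {x : ι → M | f^[a] (x i) = f^[b] (x j)} := by
  rcases le_total a b with hab | hab
  · have : {x : ι → M | f^[a] (x i) = f^[b] (x j)} = litSet f (.inl (i, j, b - a)) := by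
      ext x
      simp only [litSet, mem_setOf_eq]
      rw [show b = a + (b - a) by omega, Function.iterate_add_apply]
      simp only [Nat.add_sub_cancel_left]
      exact ⟨fun hh => h.iterInj a hh, fun hh => by rw [hh]⟩
    rw [this]; exact BC_lit _
  · have : {x : ι → M | f^[a] (x i) = f^[b] (x j)} = litSet f (.inl (j, i, a - b)) := by
      ext x
      simp only [litSet, mem_setOf_eq]
      rw [show a = b + (a - b) by omega, Function.iterate_add_apply]
      simp only [Nat.add_sub_cancel_left]
      exact ⟨fun hh => h.iterInj b hh.symm, fun hh => by rw [hh]⟩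
    rw [this]; exact BC_lit _

theorem atomBC2 (h : ModelTN N M f c) (k : ℕ) (i : ι) (a : M) :
    BC f {x : ι → M | f^[k] (x i) = a} := by
  by_cases ha : ∃ b, f^[k] b = a
  · obtain ⟨b, rfl⟩ := ha
    have : {x : ι → M | f^[k] (x i) = f^[k] b} = litSet f (.inr (i, b)) := by
      ext x
      simp only [litSet, mem_setOf_eq]
      exact ⟨fun hh => h.iterInj k hh, fun hh => by rw [hh]⟩
    rw [this]; exact BC_lit _
  · have : {x : ι → M | f^[k] (x i) = a} = ∅ := by
      ext x; simp only [mem_setOf_eq, mem_empty_iff_false, iff_false]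
      exact fun hh => ha ⟨x i, hh⟩
    rw [this]; exact BC_empty

theorem termBC (h : ModelTN N M f c) {u w : (ι → M) → M} (hu : TermF f u) (hw : TermF f w) :
    BC f {x | u x = w x} := by
  rcases hu with ⟨a, i, hu⟩ | ⟨m, hu⟩ <;> rcases hw with ⟨b, j, hw⟩ | ⟨m', hw⟩
  · have : {x : ι → M | u x = w x} = {x | f^[a] (x i) = f^[b] (x j)} := by
      ext x; rw [mem_setOf_eq, mem_setOf_eq, hu, hw]
    rw [this]; exact atomBC1 h a b i j
  · have : {x : ι → M | u x = w x} = {x | f^[a] (x i) = m'} := by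
      ext x; rw [mem_setOf_eq, mem_setOf_eq, hu, hw]
    rw [this]; exact atomBC2 h a i m'
  · have : {x : ι → M | u x = w x} = {x | f^[b] (x j) = m} := by
      ext x; rw [mem_setOf_eq, mem_setOf_eq, hu, hw, eq_comm]
    rw [this]; exact atomBC2 h b j m
  · by_cases hmm : m = m'
    · have : {x : ι → M | u x = w x} = univ := by
        ext x; simp [hu, hw, hmm]
      rw [this]; exact BC_univ
    · have : {x : ι → M | u x = w x} = ∅ := by
        ext x; simp [hu, hw, hmm]
      rw [this]; exact BC_empty

end BCdev2

namespace BCdev3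
open BCdev BCdev2

variable {M : Type} {N : ℕ} {f : M → M} {c : Fin N → M} {ι : Type}

/-- Extend `x : ι → M` by the value `y` at `none`. -/
def ext (x : ι → M) (y : M) : Option ι → M := fun o => o.elim y x

@[simp] theorem ext_none (x : ι → M) (y : M) : ext x y none = y := rfl
@[simp] theorem ext_some (x : ι → M) (y : M) (i : ι) : ext x y (some i) = x i := rfl

/-- Remove the `none` variable from a literal not involving it. -/
def deopt? : Lit M (Option ι) → Option (Lit M ι)
  | .inl (some i, some j, k) => some (.inl (i, j, k))
  | .inr (some i, a) => some (.inr (i, a))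
  | _ => none

theorem deopt?_sat {l : Lit M (Option ι)} {l' : Lit M ι} (hl : deopt? l = some l')
    (x : ι → M) (y : M) : ext x y ∈ litSet f l ↔ x ∈ litSet f l' := by
  rcases l with ⟨_ | i, _ | j, k⟩ | ⟨_ | i, a⟩ <;> simp [deopt?] at hl <;>
    subst hl <;> rfl

theorem TermF_ext {y₀ : (ι → M) → M} (hy : TermF f y₀) (o : Option ι) :
    TermF f (fun x => ext x (y₀ x) o) := by
  cases o with
  | none => exact hy
  | some i => exact Or.inl ⟨0, i, fun x => rfl⟩

theorem projForced {C : Set (Option ι → M)} {R : Set (ι → M)} {y₀ : (ι → M) → M}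
    (hforce : ∀ x y, ext x y ∈ C → x ∈ R ∧ y = y₀ x)
    (hback : ∀ x, x ∈ R → True) :
    {x : ι → M | ∃ y, ext x y ∈ C} = R ∩ {x | ext x (y₀ x) ∈ C} := by
  ext x
  constructor
  · rintro ⟨y, hy⟩
    obtain ⟨hR, rfl⟩ := hforce x y hy
    exact ⟨hR, hy⟩
  · rintro ⟨_, hx⟩
    exact ⟨y₀ x, hx⟩

theorem cellRegionBC (hM : ModelTN N M f c) {R : Set (ι → M)} (hR : BC f R)
    {y₀ : (ι → M) → M}
    (hlit : ∀ l : Lit M (Option ι), ∃ D, BC f D ∧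
      ∀ x ∈ R, (ext x (y₀ x) ∈ litSet f l ↔ x ∈ D))
    (P Q : List (Lit M (Option ι))) :
    BC f (R ∩ {x | ext x (y₀ x) ∈ cell f P Q}) := by
  have aux1 : ∀ P' : List (Lit M (Option ι)),
      BC f (R ∩ {x | ∀ l ∈ P', ext x (y₀ x) ∈ litSet f l}) := by
    intro P'
    induction P' with
    | nil => simpa using hR
    | cons l P' ih =>
      obtain ⟨D, hD, hDeq⟩ := hlit l
      have heq : R ∩ {x | ∀ l' ∈ l :: P', ext x (y₀ x) ∈ litSet f l'} =
          (R ∩ D) ∩ (R ∩ {x | ∀ l' ∈ P', ext x (y₀ x) ∈ litSet f l'}) := by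
        ext x
        simp only [mem_inter_iff, mem_setOf_eq, List.mem_cons]
        constructor
        · rintro ⟨hxR, hall⟩
          exact ⟨⟨hxR, (hDeq x hxR).mp (hall l (Or.inl rfl))⟩,
            hxR, fun l' hl' => hall l' (Or.inr hl')⟩
        · rintro ⟨⟨hxR, hxD⟩, _, hall⟩
          refine ⟨hxR, fun l' hl' => ?_⟩
          rcases hl' with rfl | hl'
          · exact (hDeq x hxR).mpr hxD
          · exact hall l' hl'
      rw [heq]
      exact BC_inter (BC_inter hR hD) ih
  have aux2 : ∀ Q' : List (Lit M (Option ι)),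
      BC f (R ∩ {x | ∀ l ∈ Q', ext x (y₀ x) ∉ litSet f l}) := by
    intro Q'
    induction Q' with
    | nil => simpa using hR
    | cons l Q' ih =>
      obtain ⟨D, hD, hDeq⟩ := hlit l
      have heq : R ∩ {x | ∀ l' ∈ l :: Q', ext x (y₀ x) ∉ litSet f l'} =
          (R ∩ Dᶜ) ∩ (R ∩ {x | ∀ l' ∈ Q', ext x (y₀ x) ∉ litSet f l'}) := by
        ext x
        simp only [mem_inter_iff, mem_setOf_eq, List.mem_cons, mem_compl_iff]
        constructor
        · rintro ⟨hxR, hall⟩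
          exact ⟨⟨hxR, fun hxD => hall l (Or.inl rfl) ((hDeq x hxR).mpr hxD)⟩,
            hxR, fun l' hl' => hall l' (Or.inr hl')⟩
        · rintro ⟨⟨hxR, hxD⟩, _, hall⟩
          refine ⟨hxR, fun l' hl' => ?_⟩
          rcases hl' with rfl | hl'
          · exact fun hx => hxD ((hDeq x hxR).mp hx)
          · exact hall l' hl'
      rw [heq]
      exact BC_inter (BC_inter hR (BC_compl hD)) ih
  have heq : R ∩ {x | ext x (y₀ x) ∈ cell f P Q} =
      (R ∩ {x | ∀ l ∈ P, ext x (y₀ x) ∈ litSet f l}) ∩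
      (R ∩ {x | ∀ l ∈ Q, ext x (y₀ x) ∉ litSet f l}) := by
    ext x
    simp only [mem_inter_iff, mem_setOf_eq, cell]
    tauto
  rw [heq]
  exact BC_inter (aux1 P) (aux2 Q)

/-- `hlit` hypothesis holds when `y₀` is a term function. -/
theorem hlit_of_termF (hM : ModelTN N M f c) {y₀ : (ι → M) → M} (hy : TermF f y₀)
    (R : Set (ι → M)) :
    ∀ l : Lit M (Option ι), ∃ D, BC f D ∧
      ∀ x ∈ R, (ext x (y₀ x) ∈ litSet f l ↔ x ∈ D) := by
  intro l
  rcases l with ⟨o₁, o₂, k⟩ | ⟨o, a⟩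
  · refine ⟨{x | ext x (y₀ x) o₁ = f^[k] (ext x (y₀ x) o₂)}, ?_, fun x _ => Iff.rfl⟩
    exact termBC hM (TermF_ext hy o₁) ((TermF_ext hy o₂).comp k)
  · refine ⟨{x | ext x (y₀ x) o = a}, ?_, fun x _ => Iff.rfl⟩
    exact termBC hM (TermF_ext hy o) (Or.inr ⟨a, fun _ => rfl⟩)

end BCdev3

namespace BCdev4
open BCdev BCdev2 BCdev3

variable {M : Type} {N : ℕ} {f : M → M} {c : Fin N → M} {ι : Type}

theorem BC_rangeCond (hM : ModelTN N M f c) (j : ι) (k : ℕ) :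
    BC f {x : ι → M | x j ∈ Set.range f^[k]} := by
  have heq : {x : ι → M | x j ∈ Set.range f^[k]} =
      cell f [] ((List.range k).flatMap fun m =>
        (List.finRange N).map fun i => (Sum.inr (j, f^[m] (c i)) : Lit M ι)) := by
    ext x
    simp only [mem_setOf_eq, hM.mem_range_iter, cell, List.mem_flatMap, List.mem_map,
      List.mem_range, List.not_mem_nil, false_implies, implies_true, true_and]
    constructor
    · rintro hall l ⟨m, hm, i, -, rfl⟩ hx
      exact hall m hm i hx.symm
    · intro hall m hm i hx
      exact hall _ ⟨m, hm, i, List.mem_finRange i, rfl⟩ hx.symm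
  rw [heq]; exact BC_cell _ _

theorem hlit_case_c (hM : ModelTN N M f c) (j : ι) (k : ℕ) :
    ∀ l : Lit M (Option ι), ∃ D, BC f D ∧
      ∀ x ∈ {x : ι → M | x j ∈ Set.range f^[k]},
        (ext x ((sec hM)^[k] (x j)) ∈ litSet f l ↔ x ∈ D) := by
  intro l
  have comm : ∀ (a b : ℕ) (z : M), f^[a] (f^[b] z) = f^[b] (f^[a] z) := by
    intro a b z
    rw [← Function.iterate_add_apply, ← Function.iterate_add_apply, Nat.add_comm]
  rcases l with ⟨_ | i, _ | j', k'⟩ | ⟨_ | i, a⟩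
  · -- y = f^[k'] y
    refine ⟨litSet f (.inl (j, j, k')), BC_lit _, fun x hx => ?_⟩
    have hkey : f^[k] ((sec hM)^[k] (x j)) = x j := sec_iter_rightInv hM k hx
    show (sec hM)^[k] (x j) = f^[k'] ((sec hM)^[k] (x j)) ↔ x j = f^[k'] (x j)
    constructor
    · intro hh
      rw [← hkey]
      nth_rewrite 1 [hh]
      rw [comm]
    · intro hh
      refine hM.iterInj k ?_
      have h2 : f^[k] (f^[k'] ((sec hM)^[k] (x j))) = f^[k'] (x j) := by rw [comm, hkey]
      rw [hkey, h2]; exact hh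
  · -- y = f^[k'] (x j')
    refine ⟨litSet f (.inl (j, j', k + k')), BC_lit _, fun x hx => ?_⟩
    have hkey : f^[k] ((sec hM)^[k] (x j)) = x j := sec_iter_rightInv hM k hx
    show (sec hM)^[k] (x j) = f^[k'] (x j') ↔ x j = f^[k + k'] (x j')
    constructor
    · intro hh
      rw [← hkey, hh, ← Function.iterate_add_apply]
    · intro hh
      refine hM.iterInj k ?_
      rw [hkey, hh, ← Function.iterate_add_apply]
  · -- x i = f^[k'] y
    refine ⟨{x : ι → M | f^[k] (x i) = f^[k'] (x j)}, atomBC1 hM k k' i j, fun x hx => ?_⟩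
    have hkey : f^[k] ((sec hM)^[k] (x j)) = x j := sec_iter_rightInv hM k hx
    show x i = f^[k'] ((sec hM)^[k] (x j)) ↔ f^[k] (x i) = f^[k'] (x j)
    constructor
    · intro hh
      rw [hh, comm, hkey]
    · intro hh
      refine hM.iterInj k ?_
      have h2 : f^[k] (f^[k'] ((sec hM)^[k] (x j))) = f^[k'] (x j) := by rw [comm, hkey]
      rw [h2]; exact hh
  · -- x i = f^[k'] (x j')
    exact ⟨litSet f (.inl (i, j', k')), BC_lit _, fun x _ => Iff.rfl⟩
  · -- y = a
    refine ⟨litSet f (.inr (j, f^[k] a)), BC_lit _, fun x hx => ?_⟩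
    have hkey : f^[k] ((sec hM)^[k] (x j)) = x j := sec_iter_rightInv hM k hx
    show (sec hM)^[k] (x j) = a ↔ x j = f^[k] a
    constructor
    · intro hh
      rw [← hkey, hh]
    · intro hh
      rw [hh, sec_iter_leftInv hM k a]
  · exact ⟨litSet f (.inr (i, a)), BC_lit _, fun x _ => Iff.rfl⟩

theorem litFinite (hM : ModelTN N M f c) (x : ι → M) (l : Lit M (Option ι))
    (hld : deopt? l = none) (hl0 : l ≠ Sum.inl (none, none, 0)) :
    Set.Finite {y : M | ext x y ∈ litSet f l} := by
  rcases l with ⟨_ | i, _ | j, k⟩ | ⟨_ | i, a⟩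
  · -- y = f^[k] y
    have hk : k ≠ 0 := by rintro rfl; exact hl0 rfl
    have : {y : M | ext x y ∈ litSet f (.inl ((none : Option ι), none, k))} = ∅ := by
      ext y
      simp only [mem_empty_iff_false, iff_false]
      intro hy
      exact hM.nocycles k (Nat.pos_of_ne_zero hk) y (hy.symm)
    rw [this]; exact finite_empty
  · -- y = f^[k] (x j)
    refine (Set.finite_singleton (f^[k] (x j))).subset ?_
    intro y hy
    exact hy
  · -- x i = f^[k] y
    refine Set.Subsingleton.finite ?_
    intro y₁ h₁ y₂ h₂
    exact hM.iterInj k (h₁.symm.trans h₂)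
  · simp [deopt?] at hld
  · refine (Set.finite_singleton a).subset ?_
    intro y hy
    exact hy
  · simp [deopt?] at hld

theorem badFinite (hM : ModelTN N M f c) (x : ι → M) :
    ∀ Q : List (Lit M (Option ι)), (Sum.inl (none, none, 0) : Lit M (Option ι)) ∉ Q →
      Set.Finite {y : M | ∃ l ∈ Q, deopt? l = none ∧ ext x y ∈ litSet f l} := by
  intro Q
  induction Q with
  | nil => simp
  | cons l Q ih =>
    intro h0
    have hsplit : {y : M | ∃ l' ∈ l :: Q, deopt? l' = none ∧ ext x y ∈ litSet f l'} =
        {y : M | deopt? l = none ∧ ext x y ∈ litSet f l} ∪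
        {y : M | ∃ l' ∈ Q, deopt? l' = none ∧ ext x y ∈ litSet f l'} := by
      ext y
      simp only [mem_union, mem_setOf_eq, List.mem_cons]
      constructor
      · rintro ⟨l', rfl | hl', hn, hy⟩
        · exact Or.inl ⟨hn, hy⟩
        · exact Or.inr ⟨l', hl', hn, hy⟩
      · rintro (⟨hn, hy⟩ | ⟨l', hl', hn, hy⟩)
        · exact ⟨l, Or.inl rfl, hn, hy⟩
        · exact ⟨l', Or.inr hl', hn, hy⟩
    rw [hsplit]
    refine Set.Finite.union ?_ (ih fun h => h0 (List.mem_cons_of_mem l h))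
    rcases Classical.em (deopt? l = none) with hn | hn
    · have hl0 : l ≠ Sum.inl (none, none, 0) := by
        rintro rfl
        exact h0 (List.mem_cons_self)
      refine (litFinite hM x l hn hl0).subset ?_
      rintro y ⟨-, hy⟩
      exact hy
    · have : {y : M | deopt? l = none ∧ ext x y ∈ litSet f l} = ∅ := by
        ext y; simp [hn]
      rw [this]; exact finite_empty

end BCdev4

namespace BCdev5
open BCdev BCdev2 BCdev3 BCdev4

variable {M : Type} {N : ℕ} {f : M → M} {c : Fin N → M} {ι : Type}

theorem BC_proj_cell (hM : ModelTN N M f c) (P Q : List (Lit M (Option ι))) :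
    BC f {x : ι → M | ∃ y, ext x y ∈ cell f P Q} := by
  classical
  set l₀ : Lit M (Option ι) := Sum.inl (none, none, 0) with hl₀
  set P' := P.filter (fun l => decide (l ≠ l₀)) with hP'def
  have hP'mem : ∀ l, l ∈ P' ↔ l ∈ P ∧ l ≠ l₀ := by
    intro l
    simp [hP'def, List.mem_filter]
  have hPP' : cell f P Q = cell f P' Q := by
    ext z
    simp only [cell, mem_setOf_eq]
    constructor
    · rintro ⟨h1, h2⟩
      exact ⟨fun l hl => h1 l ((hP'mem l).mp hl).1, h2⟩
    · rintro ⟨h1, h2⟩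
      refine ⟨fun l hl => ?_, h2⟩
      by_cases hll : l = l₀
      · subst hll
        show z none = f^[0] (z none)
        simp
      · exact h1 l ((hP'mem l).mpr ⟨hl, hll⟩)
  rw [hPP']
  by_cases hex : ∃ l ∈ P', deopt? l = (none : Option (Lit M ι))
  · obtain ⟨l, hlP, hld⟩ := hex
    rcases l with ⟨_ | i, _ | j, k⟩ | ⟨_ | i, a⟩
    · -- y = f^[k] y, k ≠ 0 : cell is empty
      have hk : k ≠ 0 := by
        intro hk0
        subst hk0
        exact ((hP'mem _).mp hlP).2 rfl
      have : {x : ι → M | ∃ y, ext x y ∈ cell f P' Q} = ∅ := by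
        ext x
        simp only [mem_setOf_eq, mem_empty_iff_false, iff_false, not_exists]
        rintro y ⟨h1, -⟩
        have := h1 _ hlP
        exact hM.nocycles k (Nat.pos_of_ne_zero hk) y this.symm
      rw [this]; exact BC_empty
    · -- y = f^[k] (x j) : forced
      have heq : {x : ι → M | ∃ y, ext x y ∈ cell f P' Q} =
          univ ∩ {x | ext x (f^[k] (x j)) ∈ cell f P' Q} := by
        refine projForced (fun x y hy => ⟨trivial, ?_⟩) (fun _ _ => trivial)
        exact hy.1 _ hlP
      rw [heq]
      exact cellRegionBC hM BC_univ
        (hlit_of_termF hM (Or.inl ⟨k, j, fun x => rfl⟩) univ) P' Q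
    · -- x i = f^[k] y : section case
      have heq : {x : ι → M | ∃ y, ext x y ∈ cell f P' Q} =
          {x : ι → M | x i ∈ Set.range f^[k]} ∩
            {x | ext x ((sec hM)^[k] (x i)) ∈ cell f P' Q} := by
        refine projForced (fun x y hy => ?_) (fun _ _ => trivial)
        have hsat : x i = f^[k] y := hy.1 _ hlP
        refine ⟨⟨y, hsat.symm⟩, ?_⟩
        rw [hsat, sec_iter_leftInv hM k y]
      rw [heq]
      exact cellRegionBC hM (BC_rangeCond hM i k) (hlit_case_c hM i k) P' Q
    · simp [deopt?] at hld
    · -- y = a : forced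
      have heq : {x : ι → M | ∃ y, ext x y ∈ cell f P' Q} =
          univ ∩ {x | ext x a ∈ cell f P' Q} := by
        refine projForced (fun x y hy => ⟨trivial, ?_⟩) (fun _ _ => trivial)
        exact hy.1 _ hlP
      rw [heq]
      exact cellRegionBC hM BC_univ
        (hlit_of_termF hM (Or.inr ⟨a, fun _ => rfl⟩) univ) P' Q
    · simp [deopt?] at hld
  · -- no positive literal involves y
    push_neg at hex
    rcases Classical.em (l₀ ∈ Q) with h0 | h0
    · have : {x : ι → M | ∃ y, ext x y ∈ cell f P' Q} = ∅ := by
        ext x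
        simp only [mem_setOf_eq, mem_empty_iff_false, iff_false, not_exists]
        rintro y ⟨-, h2⟩
        refine h2 _ h0 ?_
        show ext x y none = f^[0] (ext x y none)
        simp
      rw [this]; exact BC_empty
    · have heq : {x : ι → M | ∃ y, ext x y ∈ cell f P' Q} =
          cell f (P'.filterMap deopt?) (Q.filterMap deopt?) := by
        ext x
        simp only [mem_setOf_eq]
        constructor
        · rintro ⟨y, h1, h2⟩
          constructor
          · intro l' hl'
            obtain ⟨l, hl, hls⟩ := List.mem_filterMap.mp hl'
            exact (deopt?_sat hls x y).mp (h1 l hl)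
          · intro l' hl' hx
            obtain ⟨l, hl, hls⟩ := List.mem_filterMap.mp hl'
            exact h2 l hl ((deopt?_sat hls x y).mpr hx)
        · rintro ⟨h1, h2⟩
          -- find a good value for y
          have hbad : Set.Finite {y : M | ∃ l ∈ Q, deopt? l = none ∧ ext x y ∈ litSet f l} :=
            badFinite hM x Q h0
          haveI := hM.infinite
          obtain ⟨y, hy⟩ := hbad.infinite_compl.nonempty
          refine ⟨y, fun l hl => ?_, fun l hl hsat => ?_⟩
          · obtain ⟨l', hls⟩ := Option.ne_none_iff_exists'.mp (hex l hl)
            refine (deopt?_sat hls x y).mpr (h1 l' (List.mem_filterMap.mpr ⟨l, hl, hls⟩))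
          · rcases hop : deopt? l with _ | l'
            · exact hy ⟨l, hl, hop, hsat⟩
            · exact h2 l' (List.mem_filterMap.mpr ⟨l, hl, hop⟩) ((deopt?_sat hop x y).mp hsat)
      rw [heq]
      exact BC_cell _ _

theorem BC_proj (hM : ModelTN N M f c) {A : Set (Option ι → M)} (hA : BC f A) :
    BC f {x : ι → M | ∃ y, ext x y ∈ A} := by
  obtain ⟨L, rfl⟩ := hA
  induction L with
  | nil => simpa using (BC_empty : BC f (∅ : Set (ι → M)))
  | cons pq L ih =>
    have heq : {x : ι → M | ∃ y, ext x y ∈ {z | ∃ pq' ∈ pq :: L, z ∈ cell f pq'.1 pq'.2}} =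
        {x | ∃ y, ext x y ∈ cell f pq.1 pq.2} ∪
        {x | ∃ y, ext x y ∈ {z | ∃ pq' ∈ L, z ∈ cell f pq'.1 pq'.2}} := by
      ext x
      simp only [mem_union, mem_setOf_eq, List.mem_cons]
      constructor
      · rintro ⟨y, pq', rfl | hpq', hy⟩
        · exact Or.inl ⟨y, hy⟩
        · exact Or.inr ⟨y, pq', hpq', hy⟩
      · rintro (⟨y, hy⟩ | ⟨y, pq', hpq', hy⟩)
        · exact ⟨y, pq, Or.inl rfl, hy⟩
        · exact ⟨y, pq', Or.inr hpq', hy⟩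
    rw [heq]
    exact BC_union (BC_proj_cell hM _ _) ih

end BCdev5


namespace BCdev6
open BCdev BCdev2 BCdev3 BCdev4 BCdev5 FirstOrder FirstOrder.Language

variable {M : Type} {N : ℕ} {f : M → M} {c : Fin N → M} {ι α : Type}

theorem realize_termF [inst : (LN N).Structure M]
    (h1 : ∀ (F : (LN N).Functions 1) (v : Fin 1 → M), Structure.funMap F v = f (v 0))
    (t : ((LN N)[[(Set.univ : Set M)]]).Term ι) :
    TermF f (fun x : ι → M => t.realize x) := by
  induction t with
  | var v => exact Or.inl ⟨0, v, fun x => rfl⟩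
  | @func n' F ts ih =>
    rcases F with F | F
    · match n', F, ts, ih with
      | 0, F, ts, ih =>
        refine Or.inr ⟨Structure.funMap (L := LN N) (M := M) F (fun i => i.elim0), fun x => ?_⟩
        show Structure.funMap (L := LN N) F (fun i => (ts i).realize x) = _
        exact congrArg _ (funext fun i => i.elim0)
      | 1, F, ts, ih =>
        rcases ih 0 with ⟨k, i, hv⟩ | ⟨a, hv⟩
        · refine Or.inl ⟨k + 1, i, fun x => ?_⟩
          show Structure.funMap (L := LN N) F (fun i => (ts i).realize x) = _
          simp only [h1]
          rw [show Term.realize x (ts 0) = f^[k] (x i) from hv x,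
            ← Function.iterate_succ_apply' f k]
        · refine Or.inr ⟨f a, fun x => ?_⟩
          show Structure.funMap (L := LN N) F (fun i => (ts i).realize x) = _
          simp only [h1]
          rw [show Term.realize x (ts 0) = a from hv x]
      | (n + 2), F, ts, ih => exact Empty.elim F
    · match n', F, ts with
      | 0, F, ts =>
        refine Or.inr ⟨(F : M), fun x => ?_⟩
        simp only [Term.realize_func]
        rfl
      | (n + 1), F, ts => exact PEmpty.elim F

theorem realize_BC [inst : (LN N).Structure M] (hM : ModelTN N M f c)
    (h1 : ∀ (F : (LN N).Functions 1) (v : Fin 1 → M), Structure.funMap F v = f (v 0)) :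
    ∀ {l : ℕ} (φ : ((LN N)[[(Set.univ : Set M)]]).BoundedFormula α l),
      BC f {z : α ⊕ Fin l → M |
        φ.Realize (fun a => z (Sum.inl a)) (fun i => z (Sum.inr i))} := by
  have hz : ∀ {l : ℕ} (z : α ⊕ Fin l → M),
      Sum.elim (fun a => z (Sum.inl a)) (fun i => z (Sum.inr i)) = z := by
    intro l z; funext s; cases s <;> rfl
  intro l φ
  induction φ with
  | falsum =>
    exact (BC_empty : BC f (∅ : Set ((α ⊕ Fin _) → M)))
  | equal t₁ t₂ =>
    convert termBC hM (realize_termF h1 t₁) (realize_termF h1 t₂) using 1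
    ext z
    simp only [Set.mem_setOf_eq, BoundedFormula.Realize, hz]
  | rel R ts =>
    rcases R with R | R
    exact Empty.elim R
    exact Empty.elim R
  | imp φ ψ ihφ ihψ =>
    convert BC_union (BC_compl ihφ) ihψ using 1
    ext z
    simp only [Set.mem_union, Set.mem_compl_iff, Set.mem_setOf_eq, BoundedFormula.Realize]
    tauto
  | @all l' φ ih =>
    set σ : (α ⊕ Fin (l' + 1)) → Option (α ⊕ Fin l') :=
      Sum.elim (fun a => some (Sum.inl a))
        (fun j => Fin.lastCases none (fun j' => some (Sum.inr j')) j) with hσ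
    set S := {z : α ⊕ Fin (l' + 1) → M |
      φ.Realize (fun a => z (Sum.inl a)) (fun i => z (Sum.inr i))} with hS
    have hT : BC f {w : Option (α ⊕ Fin l') → M | w ∘ σ ∈ Sᶜ} := BC_comp σ (BC_compl ih)
    have hU : BC f {x : (α ⊕ Fin l') → M | ∃ y, ext x y ∈
        {w : Option (α ⊕ Fin l') → M | w ∘ σ ∈ Sᶜ}} := BC_proj hM hT
    have hfun : ∀ (z : α ⊕ Fin l' → M) (y : M),
        (fun i : Fin (l' + 1) => (ext z y ∘ σ) (Sum.inr i)) =
          Fin.snoc (fun i => z (Sum.inr i)) y := by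
      intro z y
      funext i
      refine Fin.lastCases ?_ ?_ i
      · show (ext z y ∘ σ) (Sum.inr (Fin.last l')) = _
        rw [Fin.snoc_last]
        simp [hσ]
      · intro j'
        show (ext z y ∘ σ) (Sum.inr j'.castSucc) = _
        rw [Fin.snoc_castSucc]
        simp [hσ]
    convert BC_compl hU using 1
    ext z
    simp only [Set.mem_setOf_eq, BoundedFormula.Realize, Set.mem_compl_iff,
      not_exists, not_not]
    constructor
    · intro hall y
      simp only [Set.mem_setOf_eq, Set.mem_compl_iff, not_not, hS]
      show φ.Realize (fun a => (ext z y ∘ σ) (Sum.inl a)) _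
      rw [hfun z y]
      exact hall y
    · intro hall y
      have h2 := hall y
      simp only [Set.mem_setOf_eq, Set.mem_compl_iff, not_not, hS] at h2
      have h3 : φ.Realize (fun a => (ext z y ∘ σ) (Sum.inl a))
          (fun i => (ext z y ∘ σ) (Sum.inr i)) := h2
      rw [hfun z y] at h3
      exact h3

end BCdev6


namespace BCdev7
open BCdev BCdev2 BCdev3 BCdev4 BCdev5 BCdev6 FirstOrder FirstOrder.Language

theorem defble_BC {M : Type} {N : ℕ} {f : M → M} {c : Fin N → M} {α : Type}
    (hM : ModelTN N M f c) {A : Set (α → M)} (hdef : Defble N f c A) : BC f A := by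
  letI inst := SN N f c
  obtain ⟨φ, hφ⟩ := hdef
  have h1 : ∀ (F : (LN N).Functions 1) (v : Fin 1 → M),
      Structure.funMap (L := LN N) F v = f (v 0) := fun F v => rfl
  have hBC := realize_BC (α := α) hM h1 (l := 0) φ
  set σ : α ⊕ Fin 0 → α := Sum.elim id (fun i => i.elim0) with hσ
  have hcomp := BC_comp σ hBC
  have heq : A = {x : α → M | x ∘ σ ∈
      {z : α ⊕ Fin 0 → M | BoundedFormula.Realize φ
        (fun a => z (Sum.inl a)) (fun i => z (Sum.inr i))}} := by
    rw [hφ]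
    ext x
    simp only [Set.mem_setOf_eq]
    have h2 : (fun a => (x ∘ σ) (Sum.inl a)) = x := rfl
    have h3 : (fun i : Fin 0 => (x ∘ σ) (Sum.inr i)) = (default : Fin 0 → M) :=
      funext fun i => i.elim0
    show BoundedFormula.Realize φ x default ↔ _
    rw [h2, h3]
  rw [heq]
  exact hcomp

end BCdev7


namespace BCdev8
open BCdev BCdev2 BCdev3 BCdev4 BCdev5 BCdev6 BCdev7

variable {M : Type} {n : ℕ} {f : M → M}

theorem isSimple_lits (f : M → M) (l : List (Lit M (Fin n))) :
    IsSimple f {x | ∀ t ∈ l, x ∈ litSet f t} := by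
  refine ⟨l.filterMap Sum.getLeft?, l.filterMap Sum.getRight?, ?_⟩
  ext x
  simp only [Set.mem_setOf_eq]
  constructor
  · intro hall
    constructor
    · intro p hp
      obtain ⟨t, ht, hts⟩ := List.mem_filterMap.mp hp
      rcases t with ⟨i, j, k⟩ | ⟨i, a⟩
      · simp only [Sum.getLeft?] at hts
        cases hts
        exact hall _ ht
      · simp [Sum.getLeft?] at hts
    · intro q hq
      obtain ⟨t, ht, hts⟩ := List.mem_filterMap.mp hq
      rcases t with ⟨i, j, k⟩ | ⟨i, a⟩
      · simp [Sum.getRight?] at hts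
      · simp only [Sum.getRight?] at hts
        cases hts
        exact hall _ ht
  · rintro ⟨hE, hC⟩ t ht
    rcases t with ⟨i, j, k⟩ | ⟨i, a⟩
    · exact hE _ (List.mem_filterMap.mpr ⟨Sum.inl (i, j, k), ht, rfl⟩)
    · exact hC _ (List.mem_filterMap.mpr ⟨Sum.inr (i, a), ht, rfl⟩)

theorem BC_decomp (A : Set (Fin n → M)) (hA : BC f A) :
    ∃ (k : ℕ) (B : Fin k → Set (Fin n → M)) (Cs : Fin k → List (Set (Fin n → M))),
      (∀ i, IsSimple f (B i)) ∧
      (∀ i, ∀ s ∈ Cs i, IsSimple f s ∧ s ⊂ B i) ∧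
      (∀ i j, i ≠ j →
        Disjoint (B i \ {x | ∃ s ∈ Cs i, x ∈ s}) (B j \ {x | ∃ s ∈ Cs j, x ∈ s})) ∧
      A = ⋃ i, (B i \ {x | ∃ s ∈ Cs i, x ∈ s}) := by
  classical
  obtain ⟨L, rfl⟩ := hA
  set U := {x : Fin n → M | ∃ pq ∈ L, x ∈ cell f pq.1 pq.2} with hU
  set T : List (Lit M (Fin n)) := L.flatMap (fun pq => pq.1 ++ pq.2) with hT
  set m := T.length with hm
  -- invariance of U under literal equivalence
  have hinv : ∀ x y : Fin n → M, (∀ t ∈ T, (x ∈ litSet f t ↔ y ∈ litSet f t)) →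
      x ∈ U → y ∈ U := by
    intro x y hxy hx
    obtain ⟨pq, hpq, hx1, hx2⟩ := hx
    refine ⟨pq, hpq, ?_, ?_⟩
    · intro t ht
      exact (hxy t (List.mem_flatMap.mpr ⟨pq, hpq, List.mem_append_left _ ht⟩)).mp (hx1 t ht)
    · intro t ht hyt
      exact hx2 t ht ((hxy t (List.mem_flatMap.mpr ⟨pq, hpq,
        List.mem_append_right _ ht⟩)).mpr hyt)
  -- atoms
  set atom : (Fin m → Bool) → Set (Fin n → M) :=
    fun σ => {x | ∀ p : Fin m, (x ∈ litSet f (T.get p) ↔ σ p = true)} with hatom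
  set trueL : (Fin m → Bool) → List (Lit M (Fin n)) :=
    fun σ => ((List.finRange m).filter (fun p => σ p)).map T.get with htrueL
  set falseL : (Fin m → Bool) → List (Lit M (Fin n)) :=
    fun σ => ((List.finRange m).filter (fun p => !σ p)).map T.get with hfalseL
  set Bs : (Fin m → Bool) → Set (Fin n → M) :=
    fun σ => {x | ∀ t ∈ trueL σ, x ∈ litSet f t} with hBs
  set Css : (Fin m → Bool) → List (Set (Fin n → M)) :=
    fun σ => (falseL σ).map (fun t => Bs σ ∩ litSet f t) with hCss
  have atom_subset_Bs : ∀ σ, atom σ ⊆ Bs σ := by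
    intro σ x hx t ht
    simp only [htrueL, List.mem_map, List.mem_filter, List.mem_finRange, true_and] at ht
    obtain ⟨p, hp, rfl⟩ := ht
    exact (hx p).mpr hp
  have atom_eq : ∀ σ, atom σ = Bs σ \ {x | ∃ s ∈ Css σ, x ∈ s} := by
    intro σ
    ext x
    constructor
    · intro hx
      refine ⟨atom_subset_Bs σ hx, ?_⟩
      rintro ⟨s, hs, hxs⟩
      simp only [hCss, List.mem_map] at hs
      obtain ⟨t, ht, rfl⟩ := hs
      simp only [hfalseL, List.mem_map, List.mem_filter, List.mem_finRange, true_and] at ht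
      obtain ⟨p, hp, rfl⟩ := ht
      have := (hx p).mp hxs.2
      rw [this] at hp
      simp at hp
    · rintro ⟨hxB, hxn⟩
      intro p
      cases hσp : σ p with
      | true =>
        refine iff_of_true ?_ rfl
        refine hxB _ ?_
        simp only [htrueL, List.mem_map]
        exact ⟨p, List.mem_filter.mpr ⟨List.mem_finRange p, by simp [hσp]⟩, rfl⟩
      | false =>
        refine iff_of_false ?_ (by simp)
        intro hxl
        refine hxn ⟨Bs σ ∩ litSet f (T.get p), ?_, hxB, hxl⟩
        simp only [hCss, List.mem_map]
        refine ⟨T.get p, ?_, rfl⟩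
        simp only [hfalseL, List.mem_map]
        exact ⟨p, List.mem_filter.mpr ⟨List.mem_finRange p, by simp [hσp]⟩, rfl⟩
  -- properness and disjointness, for arbitrary assignments
  have propers : ∀ σ : Fin m → Bool, (atom σ).Nonempty →
      ∀ s ∈ Css σ, IsSimple f s ∧ s ⊂ Bs σ := by
    rintro σ ⟨x₀, hx₀⟩ s hs
    simp only [hCss, List.mem_map] at hs
    obtain ⟨t, ht, rfl⟩ := hs
    constructor
    · have : Bs σ ∩ litSet f t = {x | ∀ t' ∈ t :: trueL σ, x ∈ litSet f t'} := by
        ext x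
        simp only [Set.mem_inter_iff, Set.mem_setOf_eq, List.mem_cons, hBs]
        constructor
        · rintro ⟨hB, hl⟩ t' (rfl | ht')
          · exact hl
          · exact hB t' ht'
        · intro hall
          exact ⟨fun t' ht' => hall t' (Or.inr ht'), hall t (Or.inl rfl)⟩
      rw [this]
      exact isSimple_lits f _
    · refine ⟨Set.inter_subset_left, fun hsub => ?_⟩
      simp only [hfalseL, List.mem_map, List.mem_filter, List.mem_finRange, true_and] at ht
      obtain ⟨p, hp, rfl⟩ := ht
      have hx₀B : x₀ ∈ Bs σ := atom_subset_Bs σ hx₀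
      have hx₀l : x₀ ∉ litSet f (T.get p) := by
        intro hl
        rw [(hx₀ p).mp hl] at hp
        simp at hp
      exact hx₀l (hsub hx₀B).2
  have disjs : ∀ σ₁ σ₂ : Fin m → Bool, σ₁ ≠ σ₂ → Disjoint (atom σ₁) (atom σ₂) := by
    intro σ₁ σ₂ hne
    rw [Set.disjoint_left]
    intro x hx1 hx2
    refine hne (funext fun p => ?_)
    by_cases hx : x ∈ litSet f (T.get p)
    · rw [(hx1 p).mp hx, (hx2 p).mp hx]
    · cases hb1 : σ₁ p <;> cases hb2 : σ₂ p
      · rfl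
      · exact absurd ((hx2 p).mpr hb2) hx
      · exact absurd ((hx1 p).mpr hb1) hx
      · rfl
  -- the good atoms
  set Good : Finset (Fin m → Bool) :=
    Finset.univ.filter (fun σ => (atom σ).Nonempty ∧ atom σ ⊆ U) with hGood
  have hGoodmem : ∀ σ ∈ Good, (atom σ).Nonempty ∧ atom σ ⊆ U := by
    intro σ hσ
    simpa [hGood] using (Finset.mem_filter.mp hσ).2
  refine ⟨Good.card, fun i => Bs (Good.equivFin.symm i : Fin m → Bool),
    fun i => Css (Good.equivFin.symm i : Fin m → Bool), ?_, ?_, ?_, ?_⟩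
  · intro i
    exact isSimple_lits f _
  · intro i
    exact propers _ (hGoodmem _ (Good.equivFin.symm i).2).1
  · intro i j hij
    have h1 := atom_eq (Good.equivFin.symm i : Fin m → Bool)
    have h2 := atom_eq (Good.equivFin.symm j : Fin m → Bool)
    rw [← h1, ← h2]
    refine disjs _ _ ?_
    intro hcontra
    exact hij (Good.equivFin.symm.injective (Subtype.ext hcontra))
  · ext x
    simp only [Set.mem_iUnion]
    constructor
    · intro hx
      set σx : Fin m → Bool := fun p => decide (x ∈ litSet f (T.get p)) with hσx
      have hxatom : x ∈ atom σx := by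
        intro p
        simp [hσx]
      have hsub : atom σx ⊆ U := by
        intro y hy
        refine hinv x y ?_ hx
        intro t ht
        obtain ⟨p, rfl⟩ := List.mem_iff_get.mp ht
        rw [hy p]
        simp [hσx]
      have hσG : σx ∈ Good := by
        simp only [hGood, Finset.mem_filter]
        exact ⟨Finset.mem_univ _, ⟨x, hxatom⟩, hsub⟩
      refine ⟨Good.equivFin ⟨σx, hσG⟩, ?_⟩
      rw [← atom_eq]
      have : (Good.equivFin.symm (Good.equivFin ⟨σx, hσG⟩) : Fin m → Bool) = σx := by
        rw [Equiv.symm_apply_apply]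
      rw [this]
      exact hxatom
    · rintro ⟨i, hxi⟩
      rw [← atom_eq] at hxi
      exact (hGoodmem _ (Good.equivFin.symm i).2).2 hxi

end BCdev8


/-- Every definable subset `A ⊆ M^n` (`M` a model of `T_N`) is a finite disjoint union
`A = ⊔ᵢ (Bᵢ \ ⋃ⱼ B_{i,j})` where each `Bᵢ` is simple and each `B_{i,j}` is a simple
set properly contained in `Bᵢ`. -/
theorem stmt_16 {M : Type} (N : ℕ) (f : M → M) (c : Fin N → M)
    (h : ModelTN N M f c) {n : ℕ} (A : Set (Fin n → M))
    (hdef : Defble N f c A) :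
    ∃ (k : ℕ) (B : Fin k → Set (Fin n → M)) (Cs : Fin k → List (Set (Fin n → M))),
      (∀ i, IsSimple f (B i)) ∧
      (∀ i, ∀ s ∈ Cs i, IsSimple f s ∧ s ⊂ B i) ∧
      (∀ i j, i ≠ j →
        Disjoint (B i \ {x | ∃ s ∈ Cs i, x ∈ s}) (B j \ {x | ∃ s ∈ Cs j, x ∈ s})) ∧
      A = ⋃ i, (B i \ {x | ∃ s ∈ Cs i, x ∈ s}) := by
  exact BCdev8.BC_decomp A (BCdev7.defble_BC h hdef)
end
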